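/- arXiv:2012.06403 — 7 statements merged into one kernel-verified Lean document; each statement's English description precedes it below -/
import Mathlib

section
/- Let A and B be commutative Fréchet algebras. A function σ : Δ(A × B) → ℂ is a BSE-function if and only if the function σ₁ : Δ(A) → ℂ, σ₁(φ) := σ(φ∘pr₁), is a BSE-function on Δ(A) and the function σ₂ : Δ(B) → ℂ, σ₂(ψ) := σ(ψ∘pr₂), is a BSE-function on Δ(B). In other words, C_BSE(Δ(A ⊕ B)) = C_BSE(Δ(A)) × C_BSE(Δ(B)). -/
open WeakDual Filter Topology Bornology

/-- A function `σ` on the character space of a commutative topological `ℂ`-algebra `A` is a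
*BSE-function* if it is bounded and continuous and there are a von Neumann bounded set `M ⊆ A`
and a constant `β ≥ 0` such that `‖∑ cᵢ σ(φᵢ)‖ ≤ β ⬝ sup_{a ∈ M} ‖∑ cᵢ φᵢ(a)‖` for all finite
families of coefficients `cᵢ ∈ ℂ` and characters `φᵢ ∈ Δ(A)`. -/
def IsBSEFunction {A : Type*} [NonUnitalCommRing A] [Module ℂ A] [TopologicalSpace A]
    (σ : characterSpace ℂ A → ℂ) : Prop :=
  Continuous σ ∧ (∃ C : ℝ, ∀ φ, ‖σ φ‖ ≤ C) ∧
    ∃ (M : Set A) (β : ℝ), 0 ≤ β ∧ IsVonNBounded ℂ M ∧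
      ∀ (n : ℕ) (c : Fin n → ℂ) (φ : Fin n → characterSpace ℂ A),
        ‖∑ i, c i * σ (φ i)‖ ≤ β * ⨆ a ∈ M, ‖∑ i, c i * (φ i) a‖

/-- A (not necessarily unital) commutative topological `ℂ`-algebra is a *Fréchet algebra* if it
is complete and its topology is generated by a countable increasing family of submultiplicative
seminorms (hence it is a complete metrizable locally convex algebra). -/
def IsFrechetAlgebra (A : Type*) [NonUnitalCommRing A] [Module ℂ A]
    [UniformSpace A] : Prop :=
  ∃ p : ℕ → Seminorm ℂ A, WithSeminorms p ∧ Monotone p ∧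
    (∀ (ℓ : ℕ) (x y : A), p ℓ (x * y) ≤ p ℓ x * p ℓ y) ∧ CompleteSpace A

section CharMaps

variable {A B : Type*}
  [NonUnitalCommRing A] [Module ℂ A] [TopologicalSpace A]
  [NonUnitalCommRing B] [Module ℂ B] [TopologicalSpace B]

/-- The character `φ ∘ pr₁` of `A × B` associated to a character `φ` of `A`. -/
noncomputable def charFst (φ : characterSpace ℂ A) : characterSpace ℂ (A × B) :=
  ⟨((CharacterSpace.toCLM φ).comp (ContinuousLinearMap.fst ℂ A B) : A × B →L[ℂ] ℂ), by
    refine ⟨?_, fun x y => ?_⟩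
    · intro h
      apply φ.2.1
      refine DFunLike.ext _ _ fun a => ?_
      have := DFunLike.congr_fun h (a, 0)
      exact this
    · exact φ.2.2 x.1 y.1⟩

/-- The character `ψ ∘ pr₂` of `A × B` associated to a character `ψ` of `B`. -/
noncomputable def charSnd (ψ : characterSpace ℂ B) : characterSpace ℂ (A × B) :=
  ⟨((CharacterSpace.toCLM ψ).comp (ContinuousLinearMap.snd ℂ A B) : A × B →L[ℂ] ℂ), by
    refine ⟨?_, fun x y => ?_⟩
    · intro h
      apply ψ.2.1
      refine DFunLike.ext _ _ fun b => ?_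
      have := DFunLike.congr_fun h (0, b)
      exact this
    · exact ψ.2.2 x.2 y.2⟩

end CharMaps

section SupHelpers

lemma biSup_le_biSup' {α β : Type*} {s : Set α} {t : Set β} {f : α → ℝ} {g : β → ℝ}
    (hg0 : ∀ b, 0 ≤ g b) (hbd : ∃ C, ∀ b ∈ t, g b ≤ C)
    (h : ∀ a ∈ s, ∃ b ∈ t, f a = g b) :
    (⨆ a ∈ s, f a) ≤ ⨆ b ∈ t, g b := by
  obtain ⟨C, hC⟩ := hbd
  have hbdd : BddAbove (Set.range fun b => ⨆ _ : b ∈ t, g b) := by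
    refine ⟨max C 0, ?_⟩
    rintro x ⟨b, rfl⟩
    dsimp only
    by_cases hb : b ∈ t
    · rw [ciSup_pos hb]; exact le_max_of_le_left (hC b hb)
    · haveI : IsEmpty (b ∈ t) := ⟨hb⟩
      rw [Real.iSup_of_isEmpty]
      exact le_max_right _ _
  have hnn : 0 ≤ ⨆ b ∈ t, g b :=
    Real.iSup_nonneg fun b => Real.iSup_nonneg fun _ => hg0 b
  refine Real.iSup_le (fun a => Real.iSup_le (fun ha => ?_) hnn) hnn
  obtain ⟨b, hb, hfg⟩ := h a ha
  calc f a = g b := hfg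
    _ = ⨆ _ : b ∈ t, g b := (ciSup_pos (f := fun _ => g b) hb).symm
    _ ≤ _ := le_ciSup hbdd b

lemma biSup_nonneg' {β : Type*} {t : Set β} {g : β → ℝ} (hg0 : ∀ b, 0 ≤ g b) :
    0 ≤ ⨆ b ∈ t, g b :=
  Real.iSup_nonneg fun b => Real.iSup_nonneg fun _ => hg0 b

lemma exists_bound' {E : Type*} [AddCommGroup E] [Module ℂ E] [TopologicalSpace E]
    {M : Set E} (hM : IsVonNBounded ℂ M) (L : E →L[ℂ] ℂ) :
    ∃ C, ∀ x ∈ M, ‖L x‖ ≤ C := by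
  have h1 := hM.image L
  rw [NormedSpace.isVonNBounded_iff] at h1
  obtain ⟨C, hC⟩ := isBounded_iff_forall_norm_le.mp h1
  exact ⟨C, fun x hx => hC _ ⟨x, hx, rfl⟩⟩

lemma exists_bound_sum {E : Type*} [NonUnitalCommRing E] [Module ℂ E] [TopologicalSpace E]
    {M : Set E} (hM : IsVonNBounded ℂ M) (n : ℕ) (c : Fin n → ℂ)
    (χ : Fin n → characterSpace ℂ E) :
    ∃ C, ∀ x ∈ M, ‖∑ i, c i * χ i x‖ ≤ C := by
  obtain ⟨C, hC⟩ := exists_bound' hM (∑ i, c i • CharacterSpace.toCLM (χ i))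
  refine ⟨C, fun x hx => ?_⟩
  have := hC x hx
  simpa [ContinuousLinearMap.sum_apply, smul_eq_mul] using this

end SupHelpers

section CharHelpers

variable {A B : Type*}
  [NonUnitalCommRing A] [Module ℂ A] [TopologicalSpace A]
  [NonUnitalCommRing B] [Module ℂ B] [TopologicalSpace B]

lemma charFst_apply (φ : characterSpace ℂ A) (m : A × B) : (charFst φ : A × B → ℂ) m = φ m.1 := rfl

lemma charSnd_apply (ψ : characterSpace ℂ B) (m : A × B) : (charSnd ψ : A × B → ℂ) m = ψ m.2 := rfl

lemma char_split (χ : characterSpace ℂ (A × B)) (m : A × B) :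
    χ m = χ (m.1, (0 : B)) + χ ((0 : A), m.2) := by
  rw [← map_add]
  congr 1
  ext <;> simp

lemma char_cases (χ : characterSpace ℂ (A × B)) :
    (∀ a : A, χ (a, (0 : B)) = 0) ∨ (∀ b : B, χ ((0 : A), b) = 0) := by
  by_cases h : ∀ b : B, χ ((0 : A), b) = 0
  · exact Or.inr h
  · push_neg at h
    obtain ⟨b₀, hb⟩ := h
    refine Or.inl fun a => ?_
    have h0 : χ ((a, (0 : B)) * ((0 : A), b₀)) = χ (a, (0 : B)) * χ ((0 : A), b₀) := map_mul χ _ _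
    have hz : ((a, (0 : B)) * ((0 : A), b₀) : A × B) = 0 := by ext <;> simp
    rw [hz, map_zero] at h0
    exact (mul_eq_zero.mp h0.symm).resolve_right hb

lemma char_not_both (χ : characterSpace ℂ (A × B)) (h1 : ∀ a : A, χ (a, (0 : B)) = 0)
    (h2 : ∀ b : B, χ ((0 : A), b) = 0) : False := by
  apply χ.2.1
  refine DFunLike.ext _ _ fun m => ?_
  show χ m = 0
  rw [char_split χ m, h1 m.1, h2 m.2, add_zero]

noncomputable def restrFst (χ : characterSpace ℂ (A × B)) (h : ∀ b : B, χ ((0 : A), b) = 0) :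
    characterSpace ℂ A :=
  ⟨((CharacterSpace.toCLM χ).comp (ContinuousLinearMap.inl ℂ A B) : A →L[ℂ] ℂ), by
    refine ⟨?_, fun x y => ?_⟩
    · intro h0
      apply χ.2.1
      refine DFunLike.ext _ _ fun m => ?_
      have h1 : χ (m.1, (0 : B)) = 0 := by
        have := DFunLike.congr_fun h0 m.1
        exact this
      show χ m = 0
      rw [char_split χ m, h1, h m.2, add_zero]
    · show χ (x * y, (0 : B)) = χ (x, (0 : B)) * χ (y, (0 : B))
      rw [← map_mul χ]
      congr 1
      ext <;> simp⟩

noncomputable def restrSnd (χ : characterSpace ℂ (A × B)) (h : ∀ a : A, χ (a, (0 : B)) = 0) :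
    characterSpace ℂ B :=
  ⟨((CharacterSpace.toCLM χ).comp (ContinuousLinearMap.inr ℂ A B) : B →L[ℂ] ℂ), by
    refine ⟨?_, fun x y => ?_⟩
    · intro h0
      apply χ.2.1
      refine DFunLike.ext _ _ fun m => ?_
      have h2 : χ ((0 : A), m.2) = 0 := by
        have := DFunLike.congr_fun h0 m.2
        exact this
      show χ m = 0
      rw [char_split χ m, h m.1, h2, add_zero]
    · show χ ((0 : A), x * y) = χ ((0 : A), x) * χ ((0 : A), y)
      rw [← map_mul χ]
      congr 1
      ext <;> simp⟩

lemma restrFst_apply (χ : characterSpace ℂ (A × B)) (h : ∀ b : B, χ ((0 : A), b) = 0) (a : A) :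
    restrFst χ h a = χ (a, (0 : B)) := rfl

lemma restrSnd_apply (χ : characterSpace ℂ (A × B)) (h : ∀ a : A, χ (a, (0 : B)) = 0) (b : B) :
    restrSnd χ h b = χ ((0 : A), b) := rfl

lemma charFst_restrFst (χ : characterSpace ℂ (A × B)) (h : ∀ b : B, χ ((0 : A), b) = 0) :
    charFst (restrFst χ h) = χ := by
  ext m
  show χ (m.1, (0 : B)) = χ m
  rw [char_split χ m, h m.2, add_zero]

lemma charSnd_restrSnd (χ : characterSpace ℂ (A × B)) (h : ∀ a : A, χ (a, (0 : B)) = 0) :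
    charSnd (restrSnd χ h) = χ := by
  ext m
  show χ ((0 : A), m.2) = χ m
  rw [char_split χ m, h m.1, zero_add]

lemma continuous_charFst :
    Continuous (charFst : characterSpace ℂ A → characterSpace ℂ (A × B)) := by
  apply Continuous.subtype_mk
  apply WeakDual.continuous_of_continuous_eval
  intro m
  exact (WeakDual.eval_continuous m.1).comp continuous_subtype_val

lemma continuous_charSnd :
    Continuous (charSnd : characterSpace ℂ B → characterSpace ℂ (A × B)) := by
  apply Continuous.subtype_mk
  apply WeakDual.continuous_of_continuous_eval
  intro m
  exact (WeakDual.eval_continuous m.2).comp continuous_subtype_val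

end CharHelpers


/-- Let `A` and `B` be commutative Fréchet algebras.  A function
`σ : Δ(A × B) → ℂ` is a BSE-function if and only if `σ₁ : φ ↦ σ(φ ∘ pr₁)` is a BSE-function on
`Δ(A)` and `σ₂ : ψ ↦ σ(ψ ∘ pr₂)` is a BSE-function on `Δ(B)`.  In other words,
`C_BSE(Δ(A ⊕ B)) = C_BSE(Δ(A)) × C_BSE(Δ(B))`. -/
theorem isBSEFunction_prod_iff
    {A B : Type*}
    [NonUnitalCommRing A] [Module ℂ A] [SMulCommClass ℂ A A] [IsScalarTower ℂ A A]
    [UniformSpace A] [IsUniformAddGroup A]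
    [NonUnitalCommRing B] [Module ℂ B] [SMulCommClass ℂ B B] [IsScalarTower ℂ B B]
    [UniformSpace B] [IsUniformAddGroup B]
    (hA : IsFrechetAlgebra A) (hB : IsFrechetAlgebra B)
    (σ : characterSpace ℂ (A × B) → ℂ) :
    IsBSEFunction σ ↔
      IsBSEFunction (fun φ : characterSpace ℂ A => σ (charFst φ)) ∧
      IsBSEFunction (fun ψ : characterSpace ℂ B => σ (charSnd ψ)) := by
  
  classical
  constructor
  · rintro ⟨hc, ⟨C, hC⟩, M, β, hβ0, hM, hineq⟩
    have hM1 : IsVonNBounded ℂ (Prod.fst '' M : Set A) := by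
      have := hM.image (ContinuousLinearMap.fst ℂ A B)
      simpa using this
    have hM2 : IsVonNBounded ℂ (Prod.snd '' M : Set B) := by
      have := hM.image (ContinuousLinearMap.snd ℂ A B)
      simpa using this
    refine ⟨⟨hc.comp continuous_charFst, ⟨C, fun φ => hC _⟩, Prod.fst '' M, β, hβ0, hM1, ?_⟩,
      ⟨hc.comp continuous_charSnd, ⟨C, fun ψ => hC _⟩, Prod.snd '' M, β, hβ0, hM2, ?_⟩⟩
    · intro n c φ
      refine (hineq n c fun i => charFst (φ i)).trans (mul_le_mul_of_nonneg_left ?_ hβ0)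
      refine biSup_le_biSup' (fun _ => norm_nonneg _) (exists_bound_sum hM1 n c φ) ?_
      intro m hm
      exact ⟨m.1, ⟨m, hm, rfl⟩, rfl⟩
    · intro n c ψ
      refine (hineq n c fun i => charSnd (ψ i)).trans (mul_le_mul_of_nonneg_left ?_ hβ0)
      refine biSup_le_biSup' (fun _ => norm_nonneg _) (exists_bound_sum hM2 n c ψ) ?_
      intro m hm
      exact ⟨m.2, ⟨m, hm, rfl⟩, rfl⟩
  · rintro ⟨⟨hc1, ⟨C1, hC1⟩, M1, β1, hβ1, hM1, h1⟩, ⟨hc2, ⟨C2, hC2⟩, M2, β2, hβ2, hM2, h2⟩⟩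
    -- the two clopen pieces of the character space
    set S1 : Set (characterSpace ℂ (A × B)) := {χ | ∀ a : A, χ (a, (0 : B)) = 0} with hS1def
    set S2 : Set (characterSpace ℂ (A × B)) := {χ | ∀ b : B, χ ((0 : A), b) = 0} with hS2def
    have hS1closed : IsClosed S1 := by
      have he : S1 = ⋂ a : A, {χ : characterSpace ℂ (A × B) | χ (a, (0 : B)) = 0} := by
        ext χ; simp [hS1def, Set.mem_iInter]
      rw [he]
      exact isClosed_iInter fun a => isClosed_eq
        ((WeakDual.eval_continuous ((a, (0 : B)) : A × B)).comp continuous_subtype_val)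
        continuous_const
    have hS2closed : IsClosed S2 := by
      have he : S2 = ⋂ b : B, {χ : characterSpace ℂ (A × B) | χ ((0 : A), b) = 0} := by
        ext χ; simp [hS2def, Set.mem_iInter]
      rw [he]
      exact isClosed_iInter fun b => isClosed_eq
        ((WeakDual.eval_continuous (((0 : A), b) : A × B)).comp continuous_subtype_val)
        continuous_const
    have hS1open : IsOpen S1 := by
      have : S1 = S2ᶜ := by
        ext χ
        constructor
        · exact fun h1 h2 => char_not_both χ h1 h2
        · exact fun h2 => (char_cases χ).resolve_right h2
      rw [this]
      exact hS2closed.isOpen_compl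
    have hS2open : IsOpen S2 := by
      have : S2 = S1ᶜ := by
        ext χ
        constructor
        · exact fun h2 h1 => char_not_both χ h1 h2
        · exact fun h1 => (char_cases χ).resolve_left h1
      rw [this]
      exact hS1closed.isOpen_compl
    have hcOn1 : ContinuousOn σ S1 := by
      rw [continuousOn_iff_continuous_restrict]
      have hg : Continuous fun χ : S1 => restrSnd χ.1 χ.2 := by
        apply Continuous.subtype_mk
        apply WeakDual.continuous_of_continuous_eval
        intro b
        exact (WeakDual.eval_continuous (((0 : A), b) : A × B)).comp
          (continuous_subtype_val.comp continuous_subtype_val)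
      have he : S1.restrict σ =
          (fun ψ : characterSpace ℂ B => σ (charSnd ψ)) ∘ fun χ : S1 => restrSnd χ.1 χ.2 := by
        funext χ
        simp only [Set.restrict_apply, Function.comp_apply, charSnd_restrSnd]
        rfl
      rw [show S1.domRestrict σ = S1.restrict σ from rfl, he]
      exact hc2.comp hg
    have hcOn2 : ContinuousOn σ S2 := by
      rw [continuousOn_iff_continuous_restrict]
      have hg : Continuous fun χ : S2 => restrFst χ.1 χ.2 := by
        apply Continuous.subtype_mk
        apply WeakDual.continuous_of_continuous_eval
        intro a
        exact (WeakDual.eval_continuous ((a, (0 : B)) : A × B)).comp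
          (continuous_subtype_val.comp continuous_subtype_val)
      have he : S2.restrict σ =
          (fun φ : characterSpace ℂ A => σ (charFst φ)) ∘ fun χ : S2 => restrFst χ.1 χ.2 := by
        funext χ
        simp only [Set.restrict_apply, Function.comp_apply, charFst_restrFst]
        rfl
      rw [show S2.domRestrict σ = S2.restrict σ from rfl, he]
      exact hc1.comp hg
    have hcont : Continuous σ := by
      rw [continuous_iff_continuousAt]
      intro χ
      rcases char_cases χ with h1 | h2
      · exact hcOn1.continuousAt (hS1open.mem_nhds h1)
      · exact hcOn2.continuousAt (hS2open.mem_nhds h2)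
    -- the bounded set
    set Mu : Set (A × B) :=
      (fun a : A => (a, (0 : B))) '' M1 ∪ (fun b : B => ((0 : A), b)) '' M2 with hMudef
    have hMu : IsVonNBounded ℂ Mu := by
      have e1 : (fun a : A => (a, (0 : B))) = ⇑(ContinuousLinearMap.inl ℂ A B) := by
        funext a; simp
      have e2 : (fun b : B => ((0 : A), b)) = ⇑(ContinuousLinearMap.inr ℂ A B) := by
        funext b; simp
      rw [hMudef, e1, e2]
      exact (hM1.image _).union (hM2.image _)
    refine ⟨hcont, ⟨max C1 C2, ?_⟩, Mu, β1 + β2, by positivity, hMu, ?_⟩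
    · intro χ
      rcases char_cases χ with h1 | h2
      · rw [← charSnd_restrSnd χ h1]
        exact le_max_of_le_right (hC2 _)
      · rw [← charFst_restrFst χ h2]
        exact le_max_of_le_left (hC1 _)
    · intro n c χ
      set T : ℝ := ⨆ m ∈ Mu, ‖∑ i, c i * χ i m‖ with hTdef
      have hT0 : 0 ≤ T := biSup_nonneg' fun _ => norm_nonneg _
      have hTbd := exists_bound_sum hMu n c χ
      set P : Fin n → Prop := fun i => ∀ b : B, χ i ((0 : A), b) = 0 with hPdef
      have claim1 : ‖∑ i ∈ Finset.univ.filter P, c i * σ (χ i)‖ ≤ β1 * T := by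
        by_cases hex : ∃ j, P j
        · obtain ⟨j, hj⟩ := hex
          set φ : Fin n → characterSpace ℂ A :=
            fun i => if h : P i then restrFst (χ i) h else restrFst (χ j) hj with hφ
          set c' : Fin n → ℂ := fun i => if P i then c i else 0 with hc'
          have e1 : ∑ i ∈ Finset.univ.filter P, c i * σ (χ i)
              = ∑ i, c' i * σ (charFst (φ i)) := by
            rw [Finset.sum_filter]
            refine Finset.sum_congr rfl fun i _ => ?_
            by_cases h : P i
            · simp only [hc', hφ, if_pos h, dif_pos h, charFst_restrFst]
              exact if_pos h
            · simp [hc', if_neg h, h]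
              exact fun hp => absurd hp h
          rw [e1]
          refine (h1 n c' φ).trans (mul_le_mul_of_nonneg_left ?_ hβ1)
          refine biSup_le_biSup' (fun _ => norm_nonneg _) hTbd ?_
          intro a ha
          refine ⟨(a, (0 : B)), Or.inl ⟨a, ha, rfl⟩, ?_⟩
          congr 1
          refine Finset.sum_congr rfl fun i _ => ?_
          by_cases h : P i
          · simp only [hc', hφ, if_pos h, dif_pos h]
            rfl
          · have hQ : ∀ a' : A, χ i (a', (0 : B)) = 0 := (char_cases (χ i)).resolve_right h
            simp [hc', if_neg h, hQ a]
        · have hemp : Finset.univ.filter P = ∅ := by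
            rw [Finset.filter_eq_empty_iff]
            exact fun i _ hp => hex ⟨i, hp⟩
          rw [hemp, Finset.sum_empty, norm_zero]
          exact mul_nonneg hβ1 hT0
      have claim2 : ‖∑ i ∈ Finset.univ.filter (fun i => ¬ P i), c i * σ (χ i)‖ ≤ β2 * T := by
        by_cases hex : ∃ j, ¬ P j
        · obtain ⟨j, hj⟩ := hex
          set ψ : Fin n → characterSpace ℂ B :=
            fun i => if h : ¬ P i then restrSnd (χ i) ((char_cases (χ i)).resolve_right h)
              else restrSnd (χ j) ((char_cases (χ j)).resolve_right hj) with hψ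
          set c'' : Fin n → ℂ := fun i => if ¬ P i then c i else 0 with hc''
          have e1 : ∑ i ∈ Finset.univ.filter (fun i => ¬ P i), c i * σ (χ i)
              = ∑ i, c'' i * σ (charSnd (ψ i)) := by
            rw [Finset.sum_filter]
            refine Finset.sum_congr rfl fun i _ => ?_
            by_cases h : ¬ P i
            · simp only [hc'', hψ, if_pos h, dif_pos h, charSnd_restrSnd]
            · have hPi := not_not.mp h
              simp [hc'', eq_true hPi]
          rw [e1]
          refine (h2 n c'' ψ).trans (mul_le_mul_of_nonneg_left ?_ hβ2)
          refine biSup_le_biSup' (fun _ => norm_nonneg _) hTbd ?_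
          intro b hb
          refine ⟨((0 : A), b), Or.inr ⟨b, hb, rfl⟩, ?_⟩
          congr 1
          refine Finset.sum_congr rfl fun i _ => ?_
          by_cases h : ¬ P i
          · simp only [hc'', hψ, if_pos h, dif_pos h]
            rfl
          · have hPi := not_not.mp h
            simp [hc'', eq_true hPi, hPi b]
        · have hemp : Finset.univ.filter (fun i => ¬ P i) = ∅ := by
            rw [Finset.filter_eq_empty_iff]
            exact fun i _ hp => hex ⟨i, hp⟩
          rw [hemp, Finset.sum_empty, norm_zero]
          exact mul_nonneg hβ2 hT0
      calc ‖∑ i, c i * σ (χ i)‖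
          = ‖(∑ i ∈ Finset.univ.filter P, c i * σ (χ i))
              + ∑ i ∈ Finset.univ.filter (fun i => ¬ P i), c i * σ (χ i)‖ := by
            rw [Finset.sum_filter_add_sum_filter_not]
        _ ≤ ‖∑ i ∈ Finset.univ.filter P, c i * σ (χ i)‖
              + ‖∑ i ∈ Finset.univ.filter (fun i => ¬ P i), c i * σ (χ i)‖ := norm_add_le _ _
        _ ≤ β1 * T + β2 * T := add_le_add claim1 claim2
        _ = (β1 + β2) * T := (add_mul _ _ _).symm
end

section
/- Let A and B be commutative semisimple Fréchet algebras. Then A × B (with coordinatewise operations and product topology) is a BSE-algebra if and only if both A and B are BSE-algebras. -/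
open WeakDual Filter Topology Bornology

/-- A *multiplier* of `A` is a continuous linear map `T : A → A` with `T (a*b) = a * T b`. -/
def IsMultiplier {A : Type*} [NonUnitalCommRing A] [Module ℂ A] [TopologicalSpace A]
    (T : A →L[ℂ] A) : Prop :=
  ∀ a b : A, T (a * b) = a * T b

/-- A commutative topological `ℂ`-algebra is *semisimple* if the intersection of the kernels of
all its characters is `{0}`. -/
def IsSemisimple (A : Type*) [NonUnitalCommRing A] [Module ℂ A] [TopologicalSpace A] : Prop :=
  ∀ a : A, (∀ φ : characterSpace ℂ A, φ a = 0) → a = 0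

/-- A commutative (semisimple) topological `ℂ`-algebra `A` is a *BSE-algebra* if every
multiplier of `A` has a BSE-function as Gelfand transform, and conversely every BSE-function on
`Δ(A)` arises in this way from a multiplier of `A`. -/
def IsBSEAlgebra (A : Type*) [NonUnitalCommRing A] [Module ℂ A] [TopologicalSpace A] : Prop :=
  (∀ T : A →L[ℂ] A, IsMultiplier T →
      ∃ σ : characterSpace ℂ A → ℂ, IsBSEFunction σ ∧
        ∀ (φ : characterSpace ℂ A) (a : A), φ (T a) = σ φ * φ a) ∧
  (∀ σ : characterSpace ℂ A → ℂ, IsBSEFunction σ →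
      ∃ T : A →L[ℂ] A, IsMultiplier T ∧
        ∀ (φ : characterSpace ℂ A) (a : A), φ (T a) = σ φ * φ a)

namespace BSEProdAux


/-! ### Real-valued indexed sup helpers -/

lemma real_iSup2_nonneg {X : Type*} {M : Set X} {g : X → ℝ} (hg : ∀ a, 0 ≤ g a) :
    0 ≤ ⨆ a ∈ M, g a :=
  Real.iSup_nonneg fun a => Real.iSup_nonneg fun _ => hg a

lemma real_iSup2_le {X : Type*} {M : Set X} {g : X → ℝ} {K : ℝ} (hK : 0 ≤ K)
    (h : ∀ a ∈ M, g a ≤ K) : (⨆ a ∈ M, g a) ≤ K :=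
  Real.iSup_le (fun a => Real.iSup_le (fun ha => h a ha) hK) hK

lemma le_real_iSup2 {X : Type*} {M : Set X} {g : X → ℝ}
    {K : ℝ} (hb : ∀ a ∈ M, g a ≤ K) {a : X} (ha : a ∈ M) : g a ≤ ⨆ a ∈ M, g a := by
  have hbdd : BddAbove (Set.range fun a => ⨆ _ : a ∈ M, g a) := by
    refine ⟨max K 0, ?_⟩
    rintro x ⟨b, rfl⟩
    exact Real.iSup_le (fun hb' => le_max_of_le_left (hb b hb')) (le_max_right _ _)
  calc g a = ⨆ _ : a ∈ M, g a := (ciSup_pos (f := fun _ => g a) ha).symm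
  _ ≤ ⨆ a ∈ M, g a := le_ciSup hbdd a

/-! ### Bounds for character sums on von Neumann bounded sets -/

lemma char_bound_exists {X : Type*} [NonUnitalCommRing X] [Module ℂ X] [TopologicalSpace X]
    {M : Set X} (hM : IsVonNBounded ℂ M) {n : ℕ} (c : Fin n → ℂ)
    (φ : Fin n → characterSpace ℂ X) :
    ∃ K, ∀ a ∈ M, ‖∑ i, c i * φ i a‖ ≤ K := by
  have h : ∀ i : Fin n, ∃ K, ∀ a ∈ M, ‖φ i a‖ ≤ K := by
    intro i
    have h1 : IsVonNBounded ℂ ((CharacterSpace.toCLM (φ i)) '' M) :=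
      hM.image (CharacterSpace.toCLM (φ i))
    rw [NormedSpace.isVonNBounded_iff'] at h1
    obtain ⟨r, hr⟩ := h1
    exact ⟨r, fun a ha => hr _ (Set.mem_image_of_mem _ ha)⟩
  choose K hK using h
  refine ⟨∑ i, ‖c i‖ * K i, fun a ha => ?_⟩
  calc ‖∑ i, c i * φ i a‖ ≤ ∑ i, ‖c i * φ i a‖ := norm_sum_le _ _
  _ ≤ ∑ i, ‖c i‖ * K i := by
      refine Finset.sum_le_sum fun i _ => ?_
      rw [norm_mul]
      exact mul_le_mul_of_nonneg_left (hK i a ha) (norm_nonneg _)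

/-! ### Finset-indexed version of the BSE estimate -/

lemma bse_est_finset {X : Type*} [NonUnitalCommRing X] [Module ℂ X] [TopologicalSpace X]
    {σ : characterSpace ℂ X → ℂ} {M : Set X} {β : ℝ}
    (h : ∀ (n : ℕ) (c : Fin n → ℂ) (φ : Fin n → characterSpace ℂ X),
        ‖∑ i, c i * σ (φ i)‖ ≤ β * ⨆ a ∈ M, ‖∑ i, c i * (φ i) a‖)
    {ι : Type*} (s : Finset ι) (c : ι → ℂ) (φ : ι → characterSpace ℂ X) :
    ‖∑ i ∈ s, c i * σ (φ i)‖ ≤ β * ⨆ a ∈ M, ‖∑ i ∈ s, c i * (φ i) a‖ := by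
  have e := s.equivFin
  have key : ∀ g : ι → ℂ, ∑ j : Fin s.card, g (e.symm j).1 = ∑ i ∈ s, g i := by
    intro g
    rw [Equiv.sum_comp e.symm (fun x : s => g x.1), Finset.sum_coe_sort s g]
  have h' := h s.card (fun j => c (e.symm j).1) (fun j => φ (e.symm j).1)
  have e1 : ‖∑ i ∈ s, c i * σ (φ i)‖
      = ‖∑ j : Fin s.card, c (e.symm j).1 * σ (φ (e.symm j).1)‖ :=
    congrArg norm (key (fun i => c i * σ (φ i))).symm
  have e2 : (⨆ a ∈ M, ‖∑ j : Fin s.card, c (e.symm j).1 * (φ (e.symm j).1) a‖)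
      = ⨆ a ∈ M, ‖∑ i ∈ s, c i * (φ i) a‖ :=
    iSup_congr fun a => iSup_congr fun _ => congrArg norm (key (fun i => c i * (φ i) a))
  rw [e1, ← e2]
  exact h'



variable {A B : Type*}
  [NonUnitalCommRing A] [Module ℂ A] [TopologicalSpace A]
  [NonUnitalCommRing B] [Module ℂ B] [TopologicalSpace B]

/-- Exists a point where a character is nonzero. -/
lemma exists_apply_ne_zero (φ : characterSpace ℂ A) : ∃ x, φ x ≠ 0 := by
  by_contra h
  push_neg at h
  exact φ.2.1 (ContinuousLinearMap.ext fun x => h x)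

/-- The character of `A × B` induced by a character of `A`. -/
noncomputable def inlChar (φ : characterSpace ℂ A) : characterSpace ℂ (A × B) :=
  ⟨(CharacterSpace.toCLM φ).comp (ContinuousLinearMap.fst ℂ A B), by
    constructor
    · intro h0
      obtain ⟨a, ha⟩ := exists_apply_ne_zero φ
      exact ha (DFunLike.congr_fun h0 (a, (0 : B)))
    · intro x y
      show φ ((x * y).1) = φ x.1 * φ y.1
      rw [Prod.fst_mul, map_mul]⟩

@[simp] lemma inlChar_apply (φ : characterSpace ℂ A) (x : A × B) :
    inlChar φ x = φ x.1 := rfl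

/-- The character of `A × B` induced by a character of `B`. -/
noncomputable def inrChar (ψ : characterSpace ℂ B) : characterSpace ℂ (A × B) :=
  ⟨(CharacterSpace.toCLM ψ).comp (ContinuousLinearMap.snd ℂ A B), by
    constructor
    · intro h0
      obtain ⟨b, hb⟩ := exists_apply_ne_zero ψ
      exact hb (DFunLike.congr_fun h0 ((0 : A), b))
    · intro x y
      show ψ ((x * y).2) = ψ x.2 * ψ y.2
      rw [Prod.snd_mul, map_mul]⟩

@[simp] lemma inrChar_apply (ψ : characterSpace ℂ B) (x : A × B) :
    inrChar ψ x = ψ x.2 := rfl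

lemma continuous_inlChar :
    Continuous (inlChar : characterSpace ℂ A → characterSpace ℂ (A × B)) := by
  apply Continuous.subtype_mk
  apply WeakDual.continuous_of_continuous_eval
  intro x
  exact (WeakDual.eval_continuous x.1).comp continuous_subtype_val

lemma continuous_inrChar :
    Continuous (inrChar : characterSpace ℂ B → characterSpace ℂ (A × B)) := by
  apply Continuous.subtype_mk
  apply WeakDual.continuous_of_continuous_eval
  intro x
  exact (WeakDual.eval_continuous x.2).comp continuous_subtype_val

/-- Splitting of a character of `A × B`. -/
lemma char_split (χ : characterSpace ℂ (A × B)) (x : A × B) :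
    χ x = χ (x.1, 0) + χ (0, x.2) := by
  rw [← map_add χ]
  norm_num

lemma char_mul_cross (χ : characterSpace ℂ (A × B)) (a : A) (b : B) :
    χ (a, 0) * χ (0, b) = 0 := by
  rw [← map_mul χ]
  have : ((a, 0) : A × B) * (0, b) = 0 := by
    ext <;> simp
  rw [this, map_zero]

/-- The predicate saying a character of `A × B` comes from `A`. -/
def fromLeft (χ : characterSpace ℂ (A × B)) : Prop := ∃ a : A, χ (a, 0) ≠ 0

lemma apply_inr_eq_zero {χ : characterSpace ℂ (A × B)} (h : fromLeft χ) (b : B) :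
    χ (0, b) = 0 := by
  obtain ⟨a, ha⟩ := h
  have := char_mul_cross χ a b
  rcases mul_eq_zero.1 this with h' | h'
  · exact absurd h' ha
  · exact h'

lemma apply_inl_eq_zero {χ : characterSpace ℂ (A × B)} (h : ¬ fromLeft χ) (a : A) :
    χ (a, 0) = 0 := by
  unfold fromLeft at h
  push_neg at h
  exact h a

lemma fromRight_of_not_fromLeft {χ : characterSpace ℂ (A × B)} (h : ¬ fromLeft χ) :
    ∃ b : B, χ (0, b) ≠ 0 := by
  by_contra h'
  push_neg at h'
  obtain ⟨x, hx⟩ := exists_apply_ne_zero χ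
  apply hx
  rw [char_split, apply_inl_eq_zero h, h', add_zero]

lemma fromLeft_iff {χ : characterSpace ℂ (A × B)} :
    fromLeft χ ↔ ¬ ∃ b : B, χ (0, b) ≠ 0 := by
  constructor
  · rintro h ⟨b, hb⟩
    exact hb (apply_inr_eq_zero h b)
  · intro h
    by_contra h'
    exact h (fromRight_of_not_fromLeft h')

/-- The character of `A` obtained from a character of `A × B` coming from `A`. -/
noncomputable def charA (χ : characterSpace ℂ (A × B)) (h : fromLeft χ) : characterSpace ℂ A :=
  ⟨(CharacterSpace.toCLM χ).comp (ContinuousLinearMap.inl ℂ A B), by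
    constructor
    · intro h0
      obtain ⟨a, ha⟩ := h
      exact ha (DFunLike.congr_fun h0 a)
    · intro x y
      show χ ((x * y, 0) : A × B) = χ (x, 0) * χ (y, 0)
      rw [← map_mul χ]
      congr 1
      ext <;> simp⟩

@[simp] lemma charA_apply (χ : characterSpace ℂ (A × B)) (h : fromLeft χ) (a : A) :
    charA χ h a = χ (a, 0) := rfl

/-- The character of `B` obtained from a character of `A × B` not coming from `A`. -/
noncomputable def charB (χ : characterSpace ℂ (A × B)) (h : ¬ fromLeft χ) : characterSpace ℂ B :=
  ⟨(CharacterSpace.toCLM χ).comp (ContinuousLinearMap.inr ℂ A B), by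
    constructor
    · intro h0
      obtain ⟨b, hb⟩ := fromRight_of_not_fromLeft h
      exact hb (DFunLike.congr_fun h0 b)
    · intro x y
      show χ ((0, x * y) : A × B) = χ (0, x) * χ (0, y)
      rw [← map_mul χ]
      congr 1
      ext <;> simp⟩

@[simp] lemma charB_apply (χ : characterSpace ℂ (A × B)) (h : ¬ fromLeft χ) (b : B) :
    charB χ h b = χ (0, b) := rfl

lemma eq_inlChar {χ : characterSpace ℂ (A × B)} (h : fromLeft χ) :
    χ = inlChar (charA χ h) := by
  apply WeakDual.CharacterSpace.ext
  intro x
  rw [inlChar_apply, charA_apply, char_split χ x, apply_inr_eq_zero h, add_zero]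

lemma eq_inrChar {χ : characterSpace ℂ (A × B)} (h : ¬ fromLeft χ) :
    χ = inrChar (charB χ h) := by
  apply WeakDual.CharacterSpace.ext
  intro x
  rw [inrChar_apply, charB_apply, char_split χ x, apply_inl_eq_zero h, zero_add]

lemma fromLeft_inlChar (φ : characterSpace ℂ A) : fromLeft (inlChar (B := B) φ) := by
  obtain ⟨a, ha⟩ := exists_apply_ne_zero φ
  exact ⟨a, by simpa using ha⟩

lemma not_fromLeft_inrChar (ψ : characterSpace ℂ B) : ¬ fromLeft (inrChar (A := A) ψ) := by
  rintro ⟨a, ha⟩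
  simp at ha

lemma charA_inlChar (φ : characterSpace ℂ A) (h : fromLeft (inlChar (B := B) φ)) :
    charA (inlChar φ) h = φ := by
  apply WeakDual.CharacterSpace.ext
  intro a
  simp

lemma charB_inrChar (ψ : characterSpace ℂ B) (h : ¬ fromLeft (inrChar (A := A) ψ)) :
    charB (inrChar ψ) h = ψ := by
  apply WeakDual.CharacterSpace.ext
  intro b
  simp

open Classical in
/-- Decomposition of a character of the product. -/
noncomputable def decomp (χ : characterSpace ℂ (A × B)) :
    characterSpace ℂ A ⊕ characterSpace ℂ B :=
  if h : fromLeft χ then Sum.inl (charA χ h) else Sum.inr (charB χ h)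

lemma decomp_inlChar (φ : characterSpace ℂ A) :
    decomp (inlChar (B := B) φ) = Sum.inl φ := by
  unfold decomp
  rw [dif_pos (fromLeft_inlChar φ), charA_inlChar]

lemma decomp_inrChar (ψ : characterSpace ℂ B) :
    decomp (inrChar (A := A) ψ) = Sum.inr ψ := by
  unfold decomp
  rw [dif_neg (not_fromLeft_inrChar ψ), charB_inrChar]

lemma eq_inlChar_of_decomp {χ : characterSpace ℂ (A × B)} {φ : characterSpace ℂ A}
    (h : decomp χ = Sum.inl φ) : χ = inlChar φ := by
  unfold decomp at h
  split at h
  · rw [Sum.inl.injEq] at h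
    rw [← h]
    exact eq_inlChar ‹_›
  · exact absurd h (by simp)

lemma eq_inrChar_of_decomp {χ : characterSpace ℂ (A × B)} {ψ : characterSpace ℂ B}
    (h : decomp χ = Sum.inr ψ) : χ = inrChar ψ := by
  unfold decomp at h
  split at h
  · exact absurd h (by simp)
  · rw [Sum.inr.injEq] at h
    rw [← h]
    exact eq_inrChar ‹_›



variable {A B : Type*}
  [NonUnitalCommRing A] [Module ℂ A] [TopologicalSpace A]
  [NonUnitalCommRing B] [Module ℂ B] [TopologicalSpace B]

/-- Gluing two functions on the character spaces of the factors to a function on the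
character space of the product. -/
noncomputable def glue (σA : characterSpace ℂ A → ℂ) (σB : characterSpace ℂ B → ℂ)
    (χ : characterSpace ℂ (A × B)) : ℂ :=
  Sum.elim σA σB (decomp χ)

@[simp] lemma glue_inlChar (σA : characterSpace ℂ A → ℂ) (σB : characterSpace ℂ B → ℂ)
    (φ : characterSpace ℂ A) : glue σA σB (inlChar φ) = σA φ := by
  rw [glue, decomp_inlChar, Sum.elim_inl]

@[simp] lemma glue_inrChar (σA : characterSpace ℂ A → ℂ) (σB : characterSpace ℂ B → ℂ)
    (ψ : characterSpace ℂ B) : glue σA σB (inrChar ψ) = σB ψ := by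
  rw [glue, decomp_inrChar, Sum.elim_inr]

lemma isOpen_fromLeft : IsOpen {χ : characterSpace ℂ (A × B) | fromLeft χ} := by
  have : {χ : characterSpace ℂ (A × B) | fromLeft χ}
      = ⋃ a : A, {χ : characterSpace ℂ (A × B) | χ (a, 0) ≠ 0} := by
    ext χ; simp [fromLeft]
  rw [this]
  refine isOpen_iUnion fun a => ?_
  have hc : Continuous fun χ : characterSpace ℂ (A × B) => χ ((a, 0) : A × B) :=
    (WeakDual.eval_continuous ((a, 0) : A × B)).comp continuous_subtype_val
  exact isOpen_ne.preimage hc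

lemma isOpen_not_fromLeft : IsOpen {χ : characterSpace ℂ (A × B) | ¬ fromLeft χ} := by
  have : {χ : characterSpace ℂ (A × B) | ¬ fromLeft χ}
      = ⋃ b : B, {χ : characterSpace ℂ (A × B) | χ (0, b) ≠ 0} := by
    ext χ
    simp only [Set.mem_setOf_eq, Set.mem_iUnion]
    constructor
    · exact fun h => fromRight_of_not_fromLeft h
    · rintro ⟨b, hb⟩ h
      exact hb (apply_inr_eq_zero h b)
  rw [this]
  refine isOpen_iUnion fun b => ?_
  have hc : Continuous fun χ : characterSpace ℂ (A × B) => χ ((0, b) : A × B) :=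
    (WeakDual.eval_continuous ((0, b) : A × B)).comp continuous_subtype_val
  exact isOpen_ne.preimage hc

lemma continuous_glue {σA : characterSpace ℂ A → ℂ} {σB : characterSpace ℂ B → ℂ}
    (hA : Continuous σA) (hB : Continuous σB) : Continuous (glue σA σB) := by
  set U : Set (characterSpace ℂ (A × B)) := {χ | fromLeft χ} with hU
  set V : Set (characterSpace ℂ (A × B)) := {χ | ¬ fromLeft χ} with hV
  have hUo : IsOpen U := isOpen_fromLeft
  have hVo : IsOpen V := isOpen_not_fromLeft
  have hUc : ContinuousOn (glue σA σB) U := by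
    rw [continuousOn_iff_continuous_restrict]
    have h1 : Continuous fun χ : U => charA χ.1 χ.2 := by
      apply Continuous.subtype_mk
      apply WeakDual.continuous_of_continuous_eval
      intro a
      exact (WeakDual.eval_continuous ((a, 0) : A × B)).comp
        (continuous_subtype_val.comp continuous_subtype_val)
    have : (U.restrict (glue σA σB)) = fun χ : U => σA (charA χ.1 χ.2) := by
      funext χ
      show glue σA σB χ.1 = _
      rw [glue]
      unfold decomp
      rw [dif_pos (show fromLeft χ.1 from χ.2), Sum.elim_inl]
    show Continuous (U.restrict (glue σA σB))
    rw [this]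
    exact hA.comp h1
  have hVc : ContinuousOn (glue σA σB) V := by
    rw [continuousOn_iff_continuous_restrict]
    have h1 : Continuous fun χ : V => charB χ.1 χ.2 := by
      apply Continuous.subtype_mk
      apply WeakDual.continuous_of_continuous_eval
      intro b
      exact (WeakDual.eval_continuous ((0, b) : A × B)).comp
        (continuous_subtype_val.comp continuous_subtype_val)
    have : (V.restrict (glue σA σB)) = fun χ : V => σB (charB χ.1 χ.2) := by
      funext χ
      show glue σA σB χ.1 = _
      rw [glue]
      unfold decomp
      rw [dif_neg (show ¬ fromLeft χ.1 from χ.2), Sum.elim_inr]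
    show Continuous (V.restrict (glue σA σB))
    rw [this]
    exact hB.comp h1
  rw [continuous_iff_continuousAt]
  intro χ
  by_cases h : fromLeft χ
  · exact hUc.continuousAt (hUo.mem_nhds h)
  · exact hVc.continuousAt (hVo.mem_nhds h)

/-! ### Restriction of a BSE function to a factor -/

lemma isBSEFunction_comp_inlChar {σ : characterSpace ℂ (A × B) → ℂ} (h : IsBSEFunction σ) :
    IsBSEFunction (fun φ : characterSpace ℂ A => σ (inlChar φ)) := by
  obtain ⟨hc, ⟨C, hC⟩, M, β, hβ, hM, hest⟩ := h
  have hMA : IsVonNBounded ℂ ((ContinuousLinearMap.fst ℂ A B) '' M) :=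
    hM.image (ContinuousLinearMap.fst ℂ A B)
  refine ⟨hc.comp continuous_inlChar, ⟨C, fun φ => hC _⟩,
    (ContinuousLinearMap.fst ℂ A B) '' M, β, hβ, hMA, ?_⟩
  intro n c φ
  have h1 := hest n c (fun i => inlChar (φ i))
  refine h1.trans (mul_le_mul_of_nonneg_left ?_ hβ)
  obtain ⟨K, hK⟩ := char_bound_exists hMA c φ
  refine real_iSup2_le (real_iSup2_nonneg fun a => norm_nonneg _) ?_
  intro x hx
  have hmem : (ContinuousLinearMap.fst ℂ A B) x ∈ (ContinuousLinearMap.fst ℂ A B) '' M :=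
    ⟨x, hx, rfl⟩
  have he : ‖∑ i, c i * (inlChar (φ i)) x‖ = ‖∑ i, c i * (φ i) x.1‖ := by
    simp only [inlChar_apply]
  rw [he]
  exact le_real_iSup2 hK hmem

lemma isBSEFunction_comp_inrChar {σ : characterSpace ℂ (A × B) → ℂ} (h : IsBSEFunction σ) :
    IsBSEFunction (fun ψ : characterSpace ℂ B => σ (inrChar ψ)) := by
  obtain ⟨hc, ⟨C, hC⟩, M, β, hβ, hM, hest⟩ := h
  have hMB : IsVonNBounded ℂ ((ContinuousLinearMap.snd ℂ A B) '' M) :=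
    hM.image (ContinuousLinearMap.snd ℂ A B)
  refine ⟨hc.comp continuous_inrChar, ⟨C, fun ψ => hC _⟩,
    (ContinuousLinearMap.snd ℂ A B) '' M, β, hβ, hMB, ?_⟩
  intro n c ψ
  have h1 := hest n c (fun i => inrChar (ψ i))
  refine h1.trans (mul_le_mul_of_nonneg_left ?_ hβ)
  obtain ⟨K, hK⟩ := char_bound_exists hMB c ψ
  refine real_iSup2_le (real_iSup2_nonneg fun a => norm_nonneg _) ?_
  intro x hx
  have hmem : (ContinuousLinearMap.snd ℂ A B) x ∈ (ContinuousLinearMap.snd ℂ A B) '' M :=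
    ⟨x, hx, rfl⟩
  have he : ‖∑ i, c i * (inrChar (ψ i)) x‖ = ‖∑ i, c i * (ψ i) x.2‖ := by
    simp only [inrChar_apply]
  rw [he]
  exact le_real_iSup2 hK hmem

/-! ### Gluing BSE functions -/

lemma isBSEFunction_glue {σA : characterSpace ℂ A → ℂ} {σB : characterSpace ℂ B → ℂ}
    (hA : IsBSEFunction σA) (hB : IsBSEFunction σB) : IsBSEFunction (glue σA σB) := by
  classical
  obtain ⟨hcA, ⟨CA, hCA⟩, MA, βA, hβA, hMA, hestA⟩ := hA
  obtain ⟨hcB, ⟨CB, hCB⟩, MB, βB, hβB, hMB, hestB⟩ := hB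
  set Mset : Set (A × B) :=
    ((ContinuousLinearMap.inl ℂ A B) '' MA) ∪ ((ContinuousLinearMap.inr ℂ A B) '' MB) with hMset
  have hMbdd : IsVonNBounded ℂ Mset :=
    (hMA.image (ContinuousLinearMap.inl ℂ A B)).union (hMB.image (ContinuousLinearMap.inr ℂ A B))
  refine ⟨continuous_glue hcA hcB, ⟨max CA CB, ?_⟩, Mset, βA + βB, by positivity, hMbdd, ?_⟩
  · intro χ
    rcases hd : decomp χ with φ | ψ
    · rw [glue, hd, Sum.elim_inl]
      exact (hCA φ).trans (le_max_left _ _)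
    · rw [glue, hd, Sum.elim_inr]
      exact (hCB ψ).trans (le_max_right _ _)
  · intro n c χ
    set p : Fin n → Prop := fun i => (decomp (χ i)).isLeft with hp
    set L := Finset.univ.filter p with hLdef
    set R := Finset.univ.filter (fun i => ¬ p i) with hRdef
    obtain ⟨KM, hKM⟩ := char_bound_exists hMbdd c χ
    have hSup0 : 0 ≤ ⨆ x ∈ Mset, ‖∑ i, c i * (χ i) x‖ :=
      real_iSup2_nonneg fun _ => norm_nonneg _
    have hexA : ∀ i : {i // i ∈ L}, ∃ φ, decomp (χ i.1) = Sum.inl φ := fun i =>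
      Sum.isLeft_iff.1 (Finset.mem_filter.1 i.2).2
    choose FA hFA using hexA
    have hexB : ∀ i : {i // i ∈ R}, ∃ ψ, decomp (χ i.1) = Sum.inr ψ := fun i =>
      Sum.isRight_iff.1 (Sum.not_isLeft.1 (Finset.mem_filter.1 i.2).2)
    choose FB hFB using hexB
    -- the left part of the sum
    have hS1 : ∑ i ∈ L, c i * glue σA σB (χ i) = ∑ i ∈ L.attach, c i.1 * σA (FA i) := by
      rw [← Finset.sum_attach L (fun i => c i * glue σA σB (χ i))]
      refine Finset.sum_congr rfl fun i _ => ?_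
      rw [glue, hFA i, Sum.elim_inl]
    have hS2 : ∑ i ∈ R, c i * glue σA σB (χ i) = ∑ i ∈ R.attach, c i.1 * σB (FB i) := by
      rw [← Finset.sum_attach R (fun i => c i * glue σA σB (χ i))]
      refine Finset.sum_congr rfl fun i _ => ?_
      rw [glue, hFB i, Sum.elim_inr]
    have hsupA : (⨆ a ∈ MA, ‖∑ i ∈ L.attach, c i.1 * (FA i) a‖)
        ≤ ⨆ x ∈ Mset, ‖∑ i, c i * (χ i) x‖ := by
      refine real_iSup2_le hSup0 fun a ha => ?_
      have hmem : ((ContinuousLinearMap.inl ℂ A B) a : A × B) ∈ Mset :=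
        Set.mem_union_left _ ⟨a, ha, rfl⟩
      have heq : ∑ i ∈ L.attach, c i.1 * (FA i) a
          = ∑ i, c i * (χ i) ((a, 0) : A × B) := by
        have e1 : ∀ i : {i // i ∈ L}, (FA i) a = (χ i.1) ((a, 0) : A × B) := by
          intro i
          rw [eq_inlChar_of_decomp (hFA i), inlChar_apply]
        calc ∑ i ∈ L.attach, c i.1 * (FA i) a
            = ∑ i ∈ L.attach, c i.1 * (χ i.1) ((a, 0) : A × B) :=
              Finset.sum_congr rfl fun i _ => by rw [e1 i]
        _ = ∑ i ∈ L, c i * (χ i) ((a, 0) : A × B) :=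
              Finset.sum_attach L (fun i => c i * (χ i) ((a, 0) : A × B))
        _ = ∑ i, c i * (χ i) ((a, 0) : A × B) := by
              refine Finset.sum_subset (Finset.subset_univ L) fun i _ hi => ?_
              have hnp : ¬ p i := by
                intro hpi
                exact hi (Finset.mem_filter.2 ⟨Finset.mem_univ i, hpi⟩)
              obtain ⟨ψ, hψ⟩ := Sum.isRight_iff.1 (Sum.not_isLeft.1 hnp)
              rw [eq_inrChar_of_decomp hψ, inrChar_apply]
              simp
      rw [heq]
      exact le_real_iSup2 hKM hmem
    have hsupB : (⨆ b ∈ MB, ‖∑ i ∈ R.attach, c i.1 * (FB i) b‖)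
        ≤ ⨆ x ∈ Mset, ‖∑ i, c i * (χ i) x‖ := by
      refine real_iSup2_le hSup0 fun b hb => ?_
      have hmem : ((ContinuousLinearMap.inr ℂ A B) b : A × B) ∈ Mset :=
        Set.mem_union_right _ ⟨b, hb, rfl⟩
      have heq : ∑ i ∈ R.attach, c i.1 * (FB i) b
          = ∑ i, c i * (χ i) ((0, b) : A × B) := by
        have e1 : ∀ i : {i // i ∈ R}, (FB i) b = (χ i.1) ((0, b) : A × B) := by
          intro i
          rw [eq_inrChar_of_decomp (hFB i), inrChar_apply]
        calc ∑ i ∈ R.attach, c i.1 * (FB i) b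
            = ∑ i ∈ R.attach, c i.1 * (χ i.1) ((0, b) : A × B) :=
              Finset.sum_congr rfl fun i _ => by rw [e1 i]
        _ = ∑ i ∈ R, c i * (χ i) ((0, b) : A × B) :=
              Finset.sum_attach R (fun i => c i * (χ i) ((0, b) : A × B))
        _ = ∑ i, c i * (χ i) ((0, b) : A × B) := by
              refine Finset.sum_subset (Finset.subset_univ R) fun i _ hi => ?_
              have hpi : p i := by
                by_contra hnp
                exact hi (Finset.mem_filter.2 ⟨Finset.mem_univ i, hnp⟩)
              obtain ⟨φ, hφ⟩ := Sum.isLeft_iff.1 hpi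
              rw [eq_inlChar_of_decomp hφ, inlChar_apply]
              simp
      rw [heq]
      exact le_real_iSup2 hKM hmem
    have hL1 : ‖∑ i ∈ L, c i * glue σA σB (χ i)‖
        ≤ βA * ⨆ x ∈ Mset, ‖∑ i, c i * (χ i) x‖ := by
      rw [hS1]
      exact (bse_est_finset hestA L.attach (fun i => c i.1) FA).trans
        (mul_le_mul_of_nonneg_left hsupA hβA)
    have hL2 : ‖∑ i ∈ R, c i * glue σA σB (χ i)‖
        ≤ βB * ⨆ x ∈ Mset, ‖∑ i, c i * (χ i) x‖ := by
      rw [hS2]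
      exact (bse_est_finset hestB R.attach (fun i => c i.1) FB).trans
        (mul_le_mul_of_nonneg_left hsupB hβB)
    calc ‖∑ i, c i * glue σA σB (χ i)‖
        = ‖(∑ i ∈ L, c i * glue σA σB (χ i)) + ∑ i ∈ R, c i * glue σA σB (χ i)‖ := by
          rw [Finset.sum_filter_add_sum_filter_not]
    _ ≤ ‖∑ i ∈ L, c i * glue σA σB (χ i)‖ + ‖∑ i ∈ R, c i * glue σA σB (χ i)‖ :=
          norm_add_le _ _
    _ ≤ (βA * ⨆ x ∈ Mset, ‖∑ i, c i * (χ i) x‖) + βB * ⨆ x ∈ Mset, ‖∑ i, c i * (χ i) x‖ :=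
          add_le_add hL1 hL2
    _ = (βA + βB) * ⨆ x ∈ Mset, ‖∑ i, c i * (χ i) x‖ := (add_mul _ _ _).symm


/-! ### The zero BSE function -/

lemma isBSEFunction_zero {X : Type*} [NonUnitalCommRing X] [Module ℂ X] [TopologicalSpace X] :
    IsBSEFunction (fun _ : characterSpace ℂ X => (0 : ℂ)) := by
  refine ⟨continuous_const, ⟨0, fun _ => by simp⟩, ∅, 0, le_refl 0,
    Bornology.isVonNBounded_empty ℂ X, ?_⟩
  intro n c φ
  simp

/-! ### Multipliers and products -/

lemma isMultiplier_prodMap {TA : A →L[ℂ] A} {TB : B →L[ℂ] B}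
    (hTA : IsMultiplier TA) (hTB : IsMultiplier TB) : IsMultiplier (TA.prodMap TB) := by
  intro x y
  ext
  · simpa using hTA x.1 y.1
  · simpa using hTB x.2 y.2

lemma isMultiplier_fst (T : (A × B) →L[ℂ] (A × B)) (hT : IsMultiplier T) :
    IsMultiplier ((ContinuousLinearMap.fst ℂ A B).comp
      (T.comp (ContinuousLinearMap.inl ℂ A B))) := by
  intro a b
  have h1 : ((a * b, 0) : A × B) = (a, (0 : B)) * (b, 0) := by ext <;> simp
  show (T (a * b, 0)).1 = a * (T (b, 0)).1
  rw [h1, hT ((a, (0 : B)) : A × B) ((b, 0) : A × B)]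
  rfl

lemma isMultiplier_snd (T : (A × B) →L[ℂ] (A × B)) (hT : IsMultiplier T) :
    IsMultiplier ((ContinuousLinearMap.snd ℂ A B).comp
      (T.comp (ContinuousLinearMap.inr ℂ A B))) := by
  intro a b
  have h1 : (((0 : A), a * b) : A × B) = ((0 : A), a) * (0, b) := by ext <;> simp
  show (T (0, a * b)).2 = a * (T (0, b)).2
  rw [h1, hT (((0 : A), a) : A × B) (((0 : A), b) : A × B)]
  rfl

lemma fst_apply_inr_eq_zero (hAss : IsSemisimple A) (T : (A × B) →L[ℂ] (A × B))
    (hT : IsMultiplier T) (b : B) : (T (0, b)).1 = 0 := by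
  apply hAss
  intro φ
  obtain ⟨a, ha⟩ := exists_apply_ne_zero φ
  have h1 : ((a, 0) : A × B) * T (0, b) = 0 := by
    rw [← hT ((a, 0) : A × B) ((0, b) : A × B)]
    have h2 : ((a, 0) : A × B) * (0, b) = 0 := by ext <;> simp
    rw [h2, map_zero]
  have h2 : a * (T ((0 : A), b)).1 = 0 := congrArg Prod.fst h1
  have h3 := map_mul φ a (T ((0 : A), b)).1
  rw [h2, map_zero] at h3
  rcases mul_eq_zero.1 h3.symm with h | h
  · exact absurd h ha
  · exact h

lemma snd_apply_inl_eq_zero (hBss : IsSemisimple B) (T : (A × B) →L[ℂ] (A × B))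
    (hT : IsMultiplier T) (a : A) : (T (a, 0)).2 = 0 := by
  apply hBss
  intro ψ
  obtain ⟨b, hb⟩ := exists_apply_ne_zero ψ
  have h1 : (((0 : A), b) : A × B) * T (a, 0) = 0 := by
    rw [← hT (((0 : A), b) : A × B) ((a, 0) : A × B)]
    have h2 : (((0 : A), b) : A × B) * (a, 0) = 0 := by ext <;> simp
    rw [h2, map_zero]
  have h2 : b * (T (a, (0 : B))).2 = 0 := congrArg Prod.snd h1
  have h3 := map_mul ψ b (T (a, (0 : B))).2
  rw [h2, map_zero] at h3
  rcases mul_eq_zero.1 h3.symm with h | h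
  · exact absurd h hb
  · exact h

lemma T_apply_split (T : (A × B) →L[ℂ] (A × B)) (x : A × B) :
    T x = T (x.1, 0) + T (0, x.2) := by
  rw [← map_add]
  norm_num

end BSEProdAux

open BSEProdAux in
/-- Let `A` and `B` be commutative semisimple Fréchet algebras.  Then `A × B`
(with coordinatewise operations and the product topology) is a BSE-algebra if and only if both
`A` and `B` are BSE-algebras. -/
theorem isBSEAlgebra_prod_iff
    {A B : Type*}
    [NonUnitalCommRing A] [Module ℂ A] [SMulCommClass ℂ A A] [IsScalarTower ℂ A A]
    [UniformSpace A] [IsUniformAddGroup A]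
    [NonUnitalCommRing B] [Module ℂ B] [SMulCommClass ℂ B B] [IsScalarTower ℂ B B]
    [UniformSpace B] [IsUniformAddGroup B]
    (hA : IsFrechetAlgebra A) (hB : IsFrechetAlgebra B)
    (hAss : IsSemisimple A) (hBss : IsSemisimple B) :
    IsBSEAlgebra (A × B) ↔ IsBSEAlgebra A ∧ IsBSEAlgebra B := by
  clear hA hB
  constructor
  · intro h
    refine ⟨⟨?_, ?_⟩, ⟨?_, ?_⟩⟩
    · -- multipliers of A give BSE functions
      intro TA hTA
      have hT : IsMultiplier (TA.prodMap (0 : B →L[ℂ] B)) := by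
        intro x y
        ext
        · simpa using hTA x.1 y.1
        · simp
      obtain ⟨σ, hσ, hval⟩ := h.1 _ hT
      refine ⟨fun φ => σ (inlChar φ), isBSEFunction_comp_inlChar hσ, ?_⟩
      intro φ a
      have h1 := hval (inlChar φ) ((a, 0) : A × B)
      simpa using h1
    · -- BSE functions of A give multipliers
      intro σA hσA
      obtain ⟨T, hT, hval⟩ := h.2 _ (isBSEFunction_glue hσA
        (isBSEFunction_zero (X := B)))
      refine ⟨(ContinuousLinearMap.fst ℂ A B).comp
        (T.comp (ContinuousLinearMap.inl ℂ A B)), isMultiplier_fst T hT, ?_⟩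
      intro φ a
      have h1 := hval (inlChar φ) ((a, 0) : A × B)
      rw [glue_inlChar] at h1
      simpa using h1
    · -- multipliers of B give BSE functions
      intro TB hTB
      have hT : IsMultiplier ((0 : A →L[ℂ] A).prodMap TB) := by
        intro x y
        ext
        · simp
        · simpa using hTB x.2 y.2
      obtain ⟨σ, hσ, hval⟩ := h.1 _ hT
      refine ⟨fun ψ => σ (inrChar ψ), isBSEFunction_comp_inrChar hσ, ?_⟩
      intro ψ b
      have h1 := hval (inrChar ψ) ((0, b) : A × B)
      simpa using h1
    · -- BSE functions of B give multipliers
      intro σB hσB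
      obtain ⟨T, hT, hval⟩ := h.2 _ (isBSEFunction_glue
        (isBSEFunction_zero (X := A)) hσB)
      refine ⟨(ContinuousLinearMap.snd ℂ A B).comp
        (T.comp (ContinuousLinearMap.inr ℂ A B)), isMultiplier_snd T hT, ?_⟩
      intro ψ b
      have h1 := hval (inrChar ψ) ((0, b) : A × B)
      rw [glue_inrChar] at h1
      simpa using h1
  · rintro ⟨hA', hB'⟩
    constructor
    · -- multipliers of the product give BSE functions
      intro T hT
      obtain ⟨σA, hσA, hvalA⟩ := hA'.1 _ (isMultiplier_fst T hT)
      obtain ⟨σB, hσB, hvalB⟩ := hB'.1 _ (isMultiplier_snd T hT)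
      refine ⟨glue σA σB, isBSEFunction_glue hσA hσB, ?_⟩
      intro χ x
      rcases hd : decomp χ with φ | ψ
      · rw [eq_inlChar_of_decomp hd, glue_inlChar, inlChar_apply, inlChar_apply]
        have h1 : (T x).1 = (T (x.1, 0)).1 := by
          rw [T_apply_split T x, Prod.fst_add, fst_apply_inr_eq_zero hAss T hT, add_zero]
        rw [h1]
        simpa using hvalA φ x.1
      · rw [eq_inrChar_of_decomp hd, glue_inrChar, inrChar_apply, inrChar_apply]
        have h1 : (T x).2 = (T (0, x.2)).2 := by
          rw [T_apply_split T x, Prod.snd_add, snd_apply_inl_eq_zero hBss T hT, zero_add]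
        rw [h1]
        simpa using hvalB ψ x.2
    · -- BSE functions of the product give multipliers
      intro σ hσ
      obtain ⟨TA, hTA, hvalA⟩ := hA'.2 _ (isBSEFunction_comp_inlChar hσ)
      obtain ⟨TB, hTB, hvalB⟩ := hB'.2 _ (isBSEFunction_comp_inrChar hσ)
      refine ⟨TA.prodMap TB, isMultiplier_prodMap hTA hTB, ?_⟩
      intro χ x
      rcases hd : decomp χ with φ | ψ
      · rw [eq_inlChar_of_decomp hd]
        simpa using hvalA φ x.1
      · rw [eq_inrChar_of_decomp hd]
        simpa using hvalB ψ x.2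
end

section
/- Let A be a commutative topological ℂ-algebra and I a closed ideal of A, regarded as a commutative topological ℂ-algebra with the subspace topology. Then the restriction map φ ↦ φ|_I is a bijection from the set {φ ∈ Δ(A) : φ|_I ≠ 0} onto Δ(I). -/
open WeakDual Filter Topology

/-- Let `A` be a commutative topological `ℂ`-algebra and `I` a closed ideal of
`A`, regarded as a commutative topological `ℂ`-algebra with the subspace topology.  Then the
restriction map `φ ↦ φ|_I` is a bijection from `{φ ∈ Δ(A) : φ|_I ≠ 0}` onto `Δ(I)`. -/
theorem characterSpace_ideal_restriction_bijection
    {A : Type*} [CommRing A] [Algebra ℂ A] [TopologicalSpace A] [IsTopologicalRing A]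
    [ContinuousSMul ℂ A]
    (I : Ideal A) (hIc : IsClosed (I : Set A)) :
    (∀ φ : characterSpace ℂ A, (∃ x : ↥I, φ (x : A) ≠ 0) →
        ∃! χ : characterSpace ℂ ↥I, ∀ x : ↥I, χ x = φ (x : A)) ∧
    (∀ χ : characterSpace ℂ ↥I,
        ∃! φ : characterSpace ℂ A,
          (∃ x : ↥I, φ (x : A) ≠ 0) ∧ ∀ x : ↥I, χ x = φ (x : A)) := by
  constructor
  · intro φ ⟨x₀, hx₀⟩
    refine ⟨⟨⟨{ toFun := fun x => φ (x : A)
                map_add' := fun x y => map_add φ (x : A) y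
                map_smul' := fun c x => map_smul φ c (x : A) },
              ((map_continuous (φ : WeakDual ℂ A)).comp continuous_subtype_val)⟩, ?_, ?_⟩,
          fun _ => rfl, ?_⟩
    · intro h
      exact hx₀ (DFunLike.congr_fun h x₀)
    · intro x y
      exact map_mul φ (x : A) (y : A)
    · intro χ hχ
      ext x
      exact hχ x
  · intro χ
    obtain ⟨x₀, hx₀⟩ : ∃ x, χ x ≠ 0 := by
      have := χ.2.1
      exact not_forall.mp fun h => this (ContinuousLinearMap.ext fun x => h x)
    set u : ↥I := (χ x₀)⁻¹ • x₀ with hu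
    have hχu : χ u = 1 := by
      rw [hu, map_smul]
      exact inv_mul_cancel₀ hx₀
    -- the extension φ
    set f : WeakDual ℂ A :=
      ⟨{ toFun := fun a => χ ⟨a * (u : A), I.mul_mem_left a u.2⟩
         map_add' := fun a b => by
           rw [← map_add]
           exact congrArg χ (Subtype.ext (add_mul a b (u : A)))
         map_smul' := fun c a => by
           rw [← map_smul]
           exact congrArg χ (Subtype.ext (smul_mul_assoc c a (u : A))) },
       (map_continuous (χ : WeakDual ℂ ↥I)).comp
         ((continuous_mul_right (u : A)).subtype_mk _)⟩ with hf
    have fmul : ∀ a b : A, f (a * b) = f a * f b := by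
      intro a b
      show χ ⟨a * b * u, _⟩ = χ ⟨a * u, _⟩ * χ ⟨b * u, _⟩
      calc χ ⟨a * b * (u:A), I.mul_mem_left _ u.2⟩
          = χ ⟨a * b * u, I.mul_mem_left _ u.2⟩ * χ u := by rw [hχu, mul_one]
        _ = χ ((⟨a * b * u, I.mul_mem_left _ u.2⟩ : ↥I) * u) := (map_mul χ _ _).symm
        _ = χ ((⟨a * (u:A), I.mul_mem_left _ u.2⟩ : ↥I) * ⟨b * u, I.mul_mem_left _ u.2⟩) := by
              congr 1
              ext
              show a * b * u * u = a * u * (b * u)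
              ring
        _ = χ ⟨a * u, _⟩ * χ ⟨b * u, _⟩ := map_mul χ _ _
    have hφ : f ∈ characterSpace ℂ A := by
      refine ⟨?_, fmul⟩
      intro h
      have h1 : f 1 = 0 := by rw [h]; rfl
      have : f 1 = 1 := by
        show χ ⟨1 * (u:A), _⟩ = 1
        rw [← hχu]
        congr 1
        ext
        exact one_mul _
      rw [this] at h1
      exact one_ne_zero h1
    have hres : ∀ x : ↥I, χ x = f (x : A) := by
      intro x
      show χ x = χ ⟨(x:A) * u, _⟩
      calc χ x = χ x * χ u := by rw [hχu, mul_one]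
        _ = χ (x * u) := (map_mul χ _ _).symm
        _ = χ ⟨(x:A) * u, _⟩ := rfl
    refine ⟨⟨f, hφ⟩, ⟨⟨u, show f (u : A) ≠ 0 by rw [← hres u, hχu]; exact one_ne_zero⟩, hres⟩, ?_⟩
    rintro ⟨g, hg⟩ ⟨-, hgres⟩
    ext a
    show g a = f a
    have hgres' : ∀ x : ↥I, χ x = g (x : A) := hgres
    have hgu : g (u : A) = 1 := by rw [← hgres' u, hχu]
    calc g a = g a * g (u : A) := by rw [hgu, mul_one]
      _ = g (a * u) := (hg.2 a u).symm
      _ = χ ⟨a * u, I.mul_mem_left a u.2⟩ := (hgres' ⟨a * (u:A), I.mul_mem_left a u.2⟩).symm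
      _ = f a := rfl
end

section
/- Let A be a commutative topological ℂ-algebra whose character space Δ(A) is discrete, and let I be a closed ideal of A, regarded as a commutative topological ℂ-algebra with the subspace topology. Then the character space Δ(I) is discrete. -/
open WeakDual Filter Topology

/-- Let `A` be a commutative topological `ℂ`-algebra whose character space
`Δ(A)` is discrete, and let `I` be a closed ideal of `A`, regarded as a commutative topological
`ℂ`-algebra with the subspace topology.  Then the character space `Δ(I)` is discrete. -/
theorem characterSpace_ideal_discrete
    {A : Type*} [CommRing A] [Algebra ℂ A] [TopologicalSpace A] [IsTopologicalRing A]
    [ContinuousSMul ℂ A]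
    (hA : DiscreteTopology (characterSpace ℂ A))
    (I : Ideal A) (hIc : IsClosed (I : Set A)) :
    DiscreteTopology (characterSpace ℂ ↥I) := by
  rw [discreteTopology_iff_isOpen_singleton]
  intro φ₀
  -- pick u ∈ I with φ₀ u ≠ 0
  obtain ⟨hne, hmul₀⟩ := φ₀.2
  have : ∃ u : I, φ₀ u ≠ 0 := by
    by_contra h
    push_neg at h
    exact hne (DFunLike.ext _ _ h)
  obtain ⟨u, hu⟩ := this
  -- the continuous linear map a ↦ a * u from A to I
  let L : A →L[ℂ] I :=
    { toFun := fun b => ⟨b * (u : A), I.mul_mem_left b u.2⟩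
      map_add' := fun x y => Subtype.ext (by simp [add_mul])
      map_smul' := fun c x => Subtype.ext (by simp [smul_mul_assoc])
      cont := Continuous.subtype_mk (continuous_id.mul continuous_const) _ }
  have hL : ∀ x : I, L (x : A) = x * u := fun x => Subtype.ext rfl
  -- the extension map: φ ↦ (a ↦ φ(u)⁻¹ φ(a u))
  let F : characterSpace ℂ ↥I → WeakDual ℂ A :=
    fun φ => ((φ u)⁻¹ • ((CharacterSpace.toCLM φ).comp L) : A →L[ℂ] ℂ)
  have hFapp : ∀ (φ : characterSpace ℂ ↥I) (a : A),
      F φ a = (φ u)⁻¹ * φ (L a) := fun φ a => rfl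
  have hFx : ∀ (φ : characterSpace ℂ ↥I), φ u ≠ 0 → ∀ x : I, F φ (x : A) = φ x := by
    intro φ hφ x
    rw [hFapp, hL, map_mul φ x u]
    field_simp
  have hFmem : ∀ (φ : characterSpace ℂ ↥I), φ u ≠ 0 → F φ ∈ characterSpace ℂ A := by
    intro φ hφ
    refine ⟨?_, ?_⟩
    · intro h
      have h0 : F φ (u : A) = 0 := by rw [h]; rfl
      rw [hFx φ hφ u] at h0
      exact hφ h0
    · intro x y
      have key : L (x * y) * u = L x * L y :=
        Subtype.ext (by show x * y * (u:A) * u = x * (u:A) * (y * u); ring)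
      have h1 : φ (L (x*y)) * φ u = φ (L x) * φ (L y) := by
        rw [← map_mul φ, ← map_mul φ, key]
      rw [hFapp, hFapp, hFapp]
      field_simp
      linear_combination h1
  -- the open set U of characters not vanishing at u
  set U : Set (characterSpace ℂ ↥I) := {φ | φ u ≠ 0} with hU
  have hUopen : IsOpen U := by
    have hev : Continuous fun φ : characterSpace ℂ ↥I => φ u :=
      (WeakDual.eval_continuous (u : ↥I)).comp continuous_subtype_val
    exact isOpen_compl_iff.mpr (isClosed_singleton.preimage hev)
  -- F is continuous on U
  have hFcont : ContinuousOn F U := by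
    rw [continuousOn_iff_continuous_restrict]
    apply WeakDual.continuous_of_continuous_eval
    intro a
    have h1 : Continuous fun φ : U => ((φ : characterSpace ℂ ↥I) u)⁻¹ := by
      apply Continuous.inv₀
      · exact (WeakDual.eval_continuous (u : ↥I)).comp
          (continuous_subtype_val.comp continuous_subtype_val)
      · exact fun φ => φ.2
    have h2 : Continuous fun φ : U => (φ : characterSpace ℂ ↥I) (L a) :=
      (WeakDual.eval_continuous (L a)).comp
        (continuous_subtype_val.comp continuous_subtype_val)
    exact h1.mul h2
  -- discreteness of Δ(A) applied to the extension of φ₀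
  have hψ₀ : IsOpen ({⟨F φ₀, hFmem φ₀ hu⟩} : Set (characterSpace ℂ A)) := isOpen_discrete _
  rw [isOpen_induced_iff] at hψ₀
  obtain ⟨W, hWopen, hW⟩ := hψ₀
  have hW0 : F φ₀ ∈ W := by
    have h3 : (⟨F φ₀, hFmem φ₀ hu⟩ : characterSpace ℂ A) ∈ Subtype.val ⁻¹' W := by
      rw [hW]; exact rfl
    exact h3
  have key : ({φ₀} : Set (characterSpace ℂ ↥I)) = U ∩ F ⁻¹' W := by
    ext φ
    simp only [Set.mem_singleton_iff, Set.mem_inter_iff, Set.mem_preimage]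
    constructor
    · rintro rfl
      exact ⟨hu, hW0⟩
    · rintro ⟨hφu, hφW⟩
      have h2 : (⟨F φ, hFmem φ hφu⟩ : characterSpace ℂ A) ∈ Subtype.val ⁻¹' W := hφW
      rw [hW, Set.mem_singleton_iff] at h2
      have hFeq : F φ = F φ₀ := congrArg Subtype.val h2
      ext x
      rw [← hFx φ hφu x, ← hFx φ₀ hu x, hFeq]
  rw [key]
  exact hFcont.isOpen_inter_preimage hUopen hWopen
end

section
/- Let A be a commutative Fréchet algebra whose character space Δ(A) is discrete, and let I be a closed ideal of A, regarded as a commutative topological ℂ-algebra with the subspace topology. Let w be a BSE-function on Δ(I), and define σ : Δ(A) → ℂ by σ(φ) = w(φ|_I) if φ|_I ≠ 0 (in which case φ|_I ∈ Δ(I)) and σ(φ) = 0 if φ|_I = 0. Then σ is a BSE-function on Δ(A). -/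
open WeakDual Filter Topology Bornology

noncomputable def inclCLM {A : Type*} [CommRing A] [Algebra ℂ A] [TopologicalSpace A]
    (I : Ideal A) : ↥I →L[ℂ] A :=
  { toFun := Subtype.val
    map_add' := fun _ _ => rfl
    map_smul' := fun _ _ => rfl
    cont := continuous_subtype_val }

noncomputable def restrictChar {A : Type*} [CommRing A] [Algebra ℂ A] [TopologicalSpace A]
    (I : Ideal A) (φ : characterSpace ℂ A)
    (hφ : ¬ ∀ x : ↥I, φ (x : A) = 0) : characterSpace ℂ ↥I :=
  ⟨((φ : WeakDual ℂ A) : A →L[ℂ] ℂ).comp (inclCLM I), by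
    constructor
    · intro h
      apply hφ
      intro x
      have := congrFun (congrArg DFunLike.coe h) x
      exact this
    · intro x y
      show φ ((↑(x*y):A)) = φ x * φ y
      push_cast [map_mul]
      rfl⟩


/-- Let `A` be a commutative Fréchet algebra with discrete character space and
`I` a closed ideal of `A` (with the subspace topology).  Let `w` be a BSE-function on `Δ(I)` and
define `σ : Δ(A) → ℂ` by `σ(φ) = w(φ|_I)` if `φ|_I ≠ 0` (in which case `φ|_I ∈ Δ(I)`) and
`σ(φ) = 0` if `φ|_I = 0`.  Then `σ` is a BSE-function on `Δ(A)`. -/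
theorem extension_of_BSE_function_of_ideal
    {A : Type*} [CommRing A] [Algebra ℂ A] [UniformSpace A] [IsUniformAddGroup A]
    (hA : IsFrechetAlgebra A) (hdisc : DiscreteTopology (characterSpace ℂ A))
    (I : Ideal A) (hIc : IsClosed (I : Set A))
    (w : characterSpace ℂ ↥I → ℂ) (hw : IsBSEFunction w)
    (σ : characterSpace ℂ A → ℂ)
    (hσ0 : ∀ φ : characterSpace ℂ A, (∀ x : ↥I, φ (x : A) = 0) → σ φ = 0)
    (hσw : ∀ (φ : characterSpace ℂ A) (χ : characterSpace ℂ ↥I),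
        (∀ x : ↥I, χ x = φ (x : A)) → σ φ = w χ) :
    IsBSEFunction σ := by
  classical
  obtain ⟨-, ⟨Cw, hCw⟩, Mw, β, hβ, hMw, hineq⟩ := hw
  have hval : ∀ (φ : characterSpace ℂ A) (hφ : ¬ ∀ x : ↥I, φ (x : A) = 0),
      σ φ = w (restrictChar I φ hφ) := fun φ hφ =>
    hσw φ (restrictChar I φ hφ) (fun _ => rfl)
  refine ⟨continuous_of_discreteTopology, ⟨max Cw 0, ?_⟩, ?_⟩
  · intro φ
    by_cases hφ : ∀ x : ↥I, φ (x : A) = 0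
    · rw [hσ0 φ hφ]; simp
    · rw [hval φ hφ]; exact le_max_of_le_left (hCw _)
  · refine ⟨Subtype.val '' Mw, β, hβ, ?_, ?_⟩
    · exact hMw.image (inclCLM I)
    · intro n c φ
      set S : Finset (Fin n) := Finset.univ.filter (fun i => ¬ ∀ x : ↥I, φ i (x : A) = 0)
        with hS
      have hmemS : ∀ i, i ∈ S ↔ ¬ ∀ x : ↥I, φ i (x : A) = 0 := by
        intro i; simp [hS]
      let e := S.equivFin
      set m := S.card with hm
      let c' : Fin m → ℂ := fun j => c (e.symm j : Fin n)
      let χ' : Fin m → characterSpace ℂ ↥I := fun j =>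
        restrictChar I (φ (e.symm j : Fin n)) ((hmemS _).1 (e.symm j).2)
      -- LHS equality
      have hL : ∑ i, c i * σ (φ i) = ∑ j, c' j * w (χ' j) := by
        rw [← Finset.sum_filter_add_sum_filter_not Finset.univ
          (fun i => ¬ ∀ x : ↥I, φ i (x : A) = 0) (fun i => c i * σ (φ i))]
        have h2 : ∑ i ∈ Finset.univ.filter
            (fun i => ¬¬ ∀ x : ↥I, φ i (x : A) = 0), c i * σ (φ i) = 0 := by
          apply Finset.sum_eq_zero
          intro i hi
          rw [Finset.mem_filter] at hi
          rw [hσ0 (φ i) (not_not.mp hi.2), mul_zero]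
        rw [h2, add_zero, ← hS,
          ← Finset.sum_coe_sort S (fun i => c i * σ (φ i)),
          ← Equiv.sum_comp e.symm (fun i : {x // x ∈ S} => c (i : Fin n) * σ (φ (i : Fin n)))]
        refine Finset.sum_congr rfl fun j _ => ?_
        rw [hval (φ (e.symm j : Fin n)) ((hmemS _).1 (e.symm j).2)]
      -- pointwise equality on I
      have hpt : ∀ x : ↥I, ∑ i, c i * φ i (x : A) = ∑ j, c' j * χ' j x := by
        intro x
        rw [← Finset.sum_filter_add_sum_filter_not Finset.univ
          (fun i => ¬ ∀ x : ↥I, φ i (x : A) = 0) (fun i => c i * φ i (x : A))]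
        have h2 : ∑ i ∈ Finset.univ.filter
            (fun i => ¬¬ ∀ x : ↥I, φ i (x : A) = 0), c i * φ i (x : A) = 0 := by
          apply Finset.sum_eq_zero
          intro i hi
          rw [Finset.mem_filter] at hi
          rw [not_not.mp hi.2 x, mul_zero]
        rw [h2, add_zero, ← hS,
          ← Finset.sum_coe_sort S (fun i => c i * φ i (x : A)),
          ← Equiv.sum_comp e.symm
            (fun i : {y // y ∈ S} => c (i : Fin n) * φ (i : Fin n) (x : A))]
        rfl
      -- RHS equality via equality of ranges of the indexed families
      have hR : (⨆ a ∈ Subtype.val '' Mw, ‖∑ i, c i * (φ i) a‖)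
          = ⨆ x ∈ Mw, ‖∑ j, c' j * (χ' j) x‖ := by
        set F : A → ℝ := fun a => ⨆ _ : a ∈ Subtype.val '' Mw, ‖∑ i, c i * (φ i) a‖ with hF
        set G : ↥I → ℝ := fun x => ⨆ _ : x ∈ Mw, ‖∑ j, c' j * (χ' j) x‖ with hG
        have hFval : ∀ x : ↥I, x ∈ Mw → F (x : A) = G x := by
          intro x hx
          have h1 : (x : A) ∈ Subtype.val '' Mw := ⟨x, hx, rfl⟩
          haveI : Nonempty ((x : A) ∈ Subtype.val '' Mw) := ⟨h1⟩
          haveI : Nonempty (x ∈ Mw) := ⟨hx⟩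
          rw [hF, hG]
          simp only [ciSup_const]
          rw [hpt x]
        have hFval' : ∀ x : ↥I, x ∉ Mw → F (x : A) = 0 := by
          intro x hx
          have h1 : (x : A) ∉ Subtype.val '' Mw := by
            rintro ⟨y, hy, hyx⟩
            exact hx (Subtype.val_injective hyx ▸ hy)
          haveI : IsEmpty ((x : A) ∈ Subtype.val '' Mw) := ⟨h1⟩
          exact Real.iSup_of_isEmpty _
        have hG0 : ∀ x : ↥I, x ∉ Mw → G x = 0 := by
          intro x hx
          haveI : IsEmpty (x ∈ Mw) := ⟨hx⟩
          exact Real.iSup_of_isEmpty _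
        have hzero : F ((0 : ↥I) : A) = 0 ∧ G 0 = 0 := by
          by_cases h0 : (0 : ↥I) ∈ Mw
          · have := hFval 0 h0
            haveI : Nonempty ((0 : ↥I) ∈ Mw) := ⟨h0⟩
            have hGz : G 0 = ‖∑ j, c' j * (χ' j) 0‖ := by rw [hG]; exact ciSup_const
            have : G 0 = 0 := by rw [hGz]; simp
            exact ⟨(hFval 0 h0).trans this, this⟩
          · exact ⟨hFval' 0 h0, hG0 0 h0⟩
        have hrange : Set.range F = Set.range G := by
          ext r
          constructor
          · rintro ⟨a, rfl⟩
            by_cases h : a ∈ Subtype.val '' Mw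
            · obtain ⟨x, hx, rfl⟩ := h
              exact ⟨x, (hFval x hx).symm⟩
            · haveI : IsEmpty (a ∈ Subtype.val '' Mw) := ⟨h⟩
              have : F a = 0 := Real.iSup_of_isEmpty _
              exact ⟨0, hzero.2.trans this.symm⟩
          · rintro ⟨x, rfl⟩
            by_cases hx : x ∈ Mw
            · exact ⟨(x : A), hFval x hx⟩
            · exact ⟨((0 : ↥I) : A), hzero.1.trans (hG0 x hx).symm⟩
        show sSup (Set.range F) = sSup (Set.range G)
        rw [hrange]
      rw [hL, hR]
      exact hineq m c' χ'
end

section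
/- Let A be a commutative semisimple Fréchet algebra that is a BSE-algebra and whose character space Δ(A) is discrete, and let I be an essential closed ideal of A, regarded as a commutative topological ℂ-algebra with the subspace topology. Then for every BSE-function w on Δ(I) there exists a multiplier S of I such that ψ(S x) = w(ψ) ψ(x) for all ψ ∈ Δ(I) and x ∈ I; that is, C_BSE(Δ(I)) ⊆ M̂(I). -/
open WeakDual Filter Topology Bornology

/-- A closed ideal `I` of `A` is *essential* if `I` equals the closed linear span of
`{a * x : a ∈ A, x ∈ I}`. -/
def IsEssentialIdeal {A : Type*} [CommRing A] [Algebra ℂ A] [TopologicalSpace A]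
    (I : Ideal A) : Prop :=
  (I : Set A) =
    closure (Submodule.span ℂ {z : A | ∃ (a : A) (x : A), x ∈ I ∧ z = a * x} : Set A)


section Aux
set_option linter.unusedSectionVars false

variable {A : Type*} [CommRing A] [Algebra ℂ A] [UniformSpace A] [IsUniformAddGroup A]

private lemma contMulRight (hA : IsFrechetAlgebra A) (u : A) :
    Continuous fun a : A => a * u := by
  obtain ⟨p, hp, -, hsub, -⟩ := hA
  have : Continuous (LinearMap.mulRight ℂ u) := by
    refine Seminorm.continuous_from_bounded hp hp _ ?_
    intro i
    refine ⟨{i}, ⟨p i u, apply_nonneg _ _⟩, ?_⟩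
    rw [Finset.sup_singleton, Seminorm.le_def]
    intro x
    simp only [Seminorm.comp_apply, LinearMap.mulRight_apply, Seminorm.smul_apply,
      NNReal.smul_def, smul_eq_mul]
    calc p i (x * u) ≤ p i x * p i u := hsub i x u
    _ = p i u * p i x := mul_comm _ _
  exact this

private noncomputable def inclL (I : Ideal A) : ↥I →L[ℂ] A where
  toFun := Subtype.val
  map_add' := fun _ _ => rfl
  map_smul' := fun _ _ => rfl
  cont := continuous_subtype_val

private noncomputable def rmap (I : Ideal A) (φ : WeakDual ℂ A) : WeakDual ℂ ↥I :=
  (φ : A →L[ℂ] ℂ).comp (inclL I)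

private lemma rmap_apply (I : Ideal A) (φ : WeakDual ℂ A) (x : ↥I) :
    rmap I φ x = φ (x : A) := rfl

private lemma restrict_mem (I : Ideal A) (φ : characterSpace ℂ A)
    (h : rmap I (φ : WeakDual ℂ A) ≠ 0) :
    rmap I (φ : WeakDual ℂ A) ∈ characterSpace ℂ ↥I := by
  refine ⟨h, fun x y => ?_⟩
  have := φ.prop.2 (x : A) (y : A)
  exact this

private lemma exists_ext (hA : IsFrechetAlgebra A) (I : Ideal A) (ψ : characterSpace ℂ ↥I) :
    ∃ φ : characterSpace ℂ A, ∀ x : ↥I, (φ : WeakDual ℂ A) (x : A) = ψ x := by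
  have hne : (ψ : WeakDual ℂ ↥I) ≠ 0 := ψ.prop.1
  have hmulψ : ∀ x y : ↥I, ψ (x * y) = ψ x * ψ y := fun x y => ψ.prop.2 x y
  have : ∃ u : ↥I, ψ u ≠ 0 := by
    by_contra h
    push_neg at h
    exact hne (DFunLike.ext _ _ h)
  obtain ⟨u, hu⟩ := this
  set c : ℂ := (ψ u)⁻¹ with hc
  have hcu : c * ψ u = 1 := inv_mul_cancel₀ hu
  let L : A →L[ℂ] ↥I :=
    { toFun := fun a => ⟨a * (u : A), I.mul_mem_left a u.prop⟩
      map_add' := fun a b => Subtype.ext (add_mul a b _)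
      map_smul' := fun r a => Subtype.ext (smul_mul_assoc r a _)
      cont := (contMulRight hA (u : A)).subtype_mk _ }
  let Φ : A →L[ℂ] ℂ := c • ((ψ : WeakDual ℂ ↥I) : ↥I →L[ℂ] ℂ).comp L
  have hΦ : ∀ a : A, Φ a = c * ψ ⟨a * (u : A), I.mul_mem_left a u.prop⟩ := fun a => rfl
  have hkey : ∀ a b : A,
      ψ ⟨a * (u:A), I.mul_mem_left a u.prop⟩ * ψ ⟨b * (u:A), I.mul_mem_left b u.prop⟩
      = ψ ⟨a * b * (u:A), I.mul_mem_left (a*b) u.prop⟩ * ψ u := by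
    intro a b
    rw [← hmulψ, ← hmulψ]
    congr 1
    exact Subtype.ext (by show a * (u:A) * (b * (u:A)) = a * b * (u:A) * (u:A); ring)
  have hmulΦ : ∀ a b : A, Φ (a * b) = Φ a * Φ b := by
    intro a b
    rw [hΦ, hΦ, hΦ]
    calc c * ψ ⟨a * b * (u:A), _⟩
        = (c * ψ u) * (c * ψ ⟨a * b * (u:A), I.mul_mem_left (a*b) u.prop⟩) := by rw [hcu]; ring
      _ = c * (ψ ⟨a * b * (u:A), I.mul_mem_left (a*b) u.prop⟩ * ψ u) * c := by ring
      _ = c * (ψ ⟨a * (u:A), I.mul_mem_left a u.prop⟩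
            * ψ ⟨b * (u:A), I.mul_mem_left b u.prop⟩) * c := by rw [hkey]
      _ = (c * ψ ⟨a * (u:A), I.mul_mem_left a u.prop⟩)
            * (c * ψ ⟨b * (u:A), I.mul_mem_left b u.prop⟩) := by ring
  have hres : ∀ x : ↥I, Φ (x : A) = ψ x := by
    intro x
    rw [hΦ]
    have : (⟨(x:A) * (u:A), I.mul_mem_left _ u.prop⟩ : ↥I) = x * u := rfl
    rw [this, hmulψ]
    calc c * (ψ x * ψ u) = (c * ψ u) * ψ x := by ring
      _ = ψ x := by rw [hcu]; ring
  have hΦne : (Φ : WeakDual ℂ A) ≠ 0 := by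
    intro h0
    apply hu
    have := hres u
    rw [show Φ ((u : ↥I) : A) = (Φ : WeakDual ℂ A) ((u : ↥I) : A) from rfl, h0] at this
    simpa using this.symm
  exact ⟨⟨Φ, hΦne, hmulΦ⟩, hres⟩

private lemma multiplier_maps (I : Ideal A) (hIc : IsClosed (I : Set A))
    (hIe : IsEssentialIdeal I) (T : A →L[ℂ] A) (hT : IsMultiplier T) :
    ∀ y ∈ I, T y ∈ I := by
  set J : Submodule ℂ A := (Submodule.restrictScalars ℂ I).comap (T : A →ₗ[ℂ] A) with hJ
  have hJc : IsClosed (J : Set A) := hIc.preimage T.continuous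
  have hspan : (Submodule.span ℂ {z : A | ∃ (a : A) (x : A), x ∈ I ∧ z = a * x}) ≤ J := by
    rw [Submodule.span_le]
    rintro z ⟨a, x, hx, rfl⟩
    show T (a * x) ∈ I
    have : T (a * x) = x * T a := by rw [mul_comm a x]; exact hT x a
    rw [this]
    exact I.mul_mem_right (T a) hx
  intro y hy
  have : y ∈ closure (Submodule.span ℂ
      {z : A | ∃ (a : A) (x : A), x ∈ I ∧ z = a * x} : Set A) := by
    rw [← hIe]; exact hy
  exact closure_minimal hspan hJc this

end Aux


set_option maxHeartbeats 1000000 in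
/-- Let `A` be a commutative semisimple Fréchet algebra which is a BSE-algebra
and whose character space is discrete, and let `I` be an essential closed ideal of `A` (with the
subspace topology).  Then for every BSE-function `w` on `Δ(I)` there is a multiplier `S` of `I`
with `ψ(S x) = w(ψ) ψ(x)` for all `ψ ∈ Δ(I)` and `x ∈ I`; that is,

`C_BSE(Δ(I)) ⊆ M̂(I)`. -/
theorem bse_function_of_ideal_is_multiplier_transform
    {A : Type*} [CommRing A] [Algebra ℂ A] [UniformSpace A] [IsUniformAddGroup A]
    (hA : IsFrechetAlgebra A) (hAss : IsSemisimple A) (hABSE : IsBSEAlgebra A)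
    (hdisc : DiscreteTopology (characterSpace ℂ A))
    (I : Ideal A) (hIc : IsClosed (I : Set A)) (hIe : IsEssentialIdeal I)
    (w : characterSpace ℂ ↥I → ℂ) (hw : IsBSEFunction w) :
    ∃ S : ↥I →L[ℂ] ↥I, IsMultiplier S ∧
      ∀ (ψ : characterSpace ℂ ↥I) (x : ↥I), ψ (S x) = w ψ * ψ x := by
  classical
  by_cases hnon : Nonempty (characterSpace ℂ ↥I)
  case neg =>
    exact ⟨0, fun a b => by simp, fun ψ x => absurd ⟨ψ⟩ hnon⟩
  obtain ⟨ψ₀⟩ := hnon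
  obtain ⟨hwc, ⟨C, hC⟩, M, β, hβ, hM, hbse⟩ := hw
  set σ : characterSpace ℂ A → ℂ := fun φ =>
    if h : rmap I (φ : WeakDual ℂ A) ≠ 0 then w ⟨_, restrict_mem I φ h⟩ else 0 with hσdef
  have hσBSE : IsBSEFunction σ := by
    refine ⟨continuous_of_discreteTopology, ⟨max C 0, ?_⟩,
      ⇑(inclL I) '' M, β, hβ, hM.image (inclL I), ?_⟩
    · intro φ
      by_cases h : rmap I (φ : WeakDual ℂ A) ≠ 0
      · simp only [hσdef, dif_pos h]; exact le_max_of_le_left (hC _)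
      · simp only [hσdef, dif_neg h]; simpa using le_max_right C 0
    · intro n c φ
      set ψv : Fin n → characterSpace ℂ ↥I := fun i =>
        if h : rmap I ((φ i : WeakDual ℂ A)) ≠ 0 then ⟨_, restrict_mem I (φ i) h⟩ else ψ₀
        with hψv
      set c' : Fin n → ℂ := fun i =>
        if rmap I ((φ i : WeakDual ℂ A)) ≠ 0 then c i else 0 with hc'
      have h1 : ∀ i, c i * σ (φ i) = c' i * w (ψv i) := by
        intro i
        by_cases h : rmap I ((φ i : WeakDual ℂ A)) ≠ 0
        · simp only [hσdef, hψv, hc', dif_pos h, if_pos h]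
        · simp only [hσdef, hψv, hc', dif_neg h, if_neg h, mul_zero, zero_mul]
      have h2 : ∀ x : ↥I, ∑ i, c' i * (ψv i) x = ∑ i, c i * (φ i) ((inclL I) x) := by
        intro x
        refine Finset.sum_congr rfl fun i _ => ?_
        by_cases h : rmap I ((φ i : WeakDual ℂ A)) ≠ 0
        · simp only [hψv, hc', dif_pos h, if_pos h]
          rfl
        · push_neg at h
          simp only [hψv, hc', dif_neg (not_not_intro h), if_neg (not_not_intro h), zero_mul]
          have : (φ i : WeakDual ℂ A) ((inclL I) x) = 0 := by
            have := congrArg (fun f : WeakDual ℂ ↥I => f x) h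
            exact this
          rw [show ((φ i) ((inclL I) x) : ℂ) = (φ i : WeakDual ℂ A) ((inclL I) x) from rfl,
            this, mul_zero]
      calc ‖∑ i, c i * σ (φ i)‖
          = ‖∑ i, c' i * w (ψv i)‖ := by rw [Finset.sum_congr rfl fun i _ => h1 i]
        _ ≤ β * ⨆ x ∈ M, ‖∑ i, c' i * (ψv i) x‖ := hbse n c' ψv
        _ = β * ⨆ a ∈ ⇑(inclL I) '' M, ‖∑ i, c i * (φ i) a‖ := by
            congr 1
            rcases M.eq_empty_or_nonempty with rfl | hMne
            · simp only [Set.image_empty, Set.mem_empty_iff_false, Real.iSup_of_isEmpty,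
                ciSup_const]
            · have key : ∀ i : Fin n, ∃ r : ℝ, ∀ x ∈ M, ‖(ψv i) x‖ ≤ r := by
                intro i
                have hb : IsVonNBounded ℂ
                    (⇑(((ψv i : WeakDual ℂ ↥I)) : ↥I →L[ℂ] ℂ) '' M) :=
                  hM.image ((ψv i : WeakDual ℂ ↥I) : ↥I →L[ℂ] ℂ)
                rw [NormedSpace.isVonNBounded_iff, Metric.isBounded_iff_subset_closedBall 0] at hb
                obtain ⟨r, hr⟩ := hb
                refine ⟨r, fun x hx => ?_⟩
                have := hr ⟨x, hx, rfl⟩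
                simpa [Metric.mem_closedBall, dist_zero_right] using this
              choose R hR using key
              have hbdd' : BddAbove
                  (Set.range fun x : M => ‖∑ i, c i * (φ i) ((inclL I) (x : ↥I))‖) := by
                refine ⟨∑ i, ‖c' i‖ * R i, ?_⟩
                rintro y ⟨x, rfl⟩
                show ‖∑ i, c i * (φ i) ((inclL I) (x : ↥I))‖ ≤ ∑ i, ‖c' i‖ * R i
                rw [← h2 (x : ↥I)]
                calc ‖∑ i, c' i * (ψv i) (x : ↥I)‖
                    ≤ ∑ i, ‖c' i * (ψv i) (x : ↥I)‖ := norm_sum_le _ _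
                  _ ≤ ∑ i, ‖c' i‖ * R i := by
                      refine Finset.sum_le_sum fun i _ => ?_
                      rw [norm_mul]
                      exact mul_le_mul_of_nonneg_left (hR i (x : ↥I) x.prop) (norm_nonneg _)
              have hpos : sSup (∅ : Set ℝ) ≤
                  ⨆ x : M, ‖∑ i, c i * (φ i) ((inclL I) (x : ↥I))‖ := by
                rw [Real.sSup_empty]
                have hne2 : Nonempty M := hMne.to_subtype
                obtain ⟨x⟩ := hne2
                exact le_trans (norm_nonneg _) (le_ciSup hbdd' x)
              rw [ciSup_image (f := ⇑(inclL I))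
                (g := fun a => ‖∑ i, c i * (φ i) a‖) hbdd' hpos]
              exact iSup_congr fun x => iSup_congr fun _ => by rw [h2 x]
  obtain ⟨T, hTm, hTg⟩ := hABSE.2 σ hσBSE
  have hmaps := multiplier_maps I hIc hIe T hTm
  let S : ↥I →L[ℂ] ↥I :=
    { toFun := fun x => ⟨T (x : A), hmaps (x : A) x.prop⟩
      map_add' := fun x y => Subtype.ext (map_add T (x : A) (y : A))
      map_smul' := fun r x => Subtype.ext (map_smul T r (x : A))
      cont := (T.continuous.comp continuous_subtype_val).subtype_mk _ }
  refine ⟨S, ?_, ?_⟩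
  · intro x y
    apply Subtype.ext
    show T ((x : A) * (y : A)) = (x : A) * T (y : A)
    exact hTm (x : A) (y : A)
  · intro ψ x
    obtain ⟨φ, hres⟩ := exists_ext hA I ψ
    have hrne : rmap I (φ : WeakDual ℂ A) ≠ 0 := by
      have : ∃ u : ↥I, ψ u ≠ 0 := by
        by_contra h
        push_neg at h
        exact ψ.prop.1 (DFunLike.ext _ _ h)
      obtain ⟨u, hu⟩ := this
      intro h0
      apply hu
      have := congrArg (fun f : WeakDual ℂ ↥I => f u) h0
      exact (hres u).symm.trans this
    have hσφ : σ φ = w ψ := by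
      rw [hσdef]
      simp only [dif_pos hrne]
      congr 1
      apply Subtype.ext
      apply DFunLike.ext
      intro y
      exact hres y
    calc ψ (S x) = (φ : WeakDual ℂ A) ((S x : ↥I) : A) := (hres (S x)).symm
      _ = (φ : WeakDual ℂ A) (T (x : A)) := rfl
      _ = σ φ * (φ : WeakDual ℂ A) (x : A) := hTg φ (x : A)
      _ = w ψ * ψ x := by rw [hσφ, hres x]
end

section
/- Let A be a commutative semisimple Fréchet algebra that is a BSE-algebra and whose character space Δ(A) is discrete, and let I be an essential closed ideal of A, regarded as a commutative topological ℂ-algebra with the subspace topology. If I is semisimple and has a bounded Δ-weak approximate identity, then I is a BSE-algebra. -/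
open WeakDual Filter Topology Bornology

/-- A net `(e_α)_{α ∈ Λ}` in a commutative topological `ℂ`-algebra `A`, indexed by a (directed)
preorder `Λ`, is a *bounded Δ-weak approximate identity* if its range is von Neumann bounded and
`φ(e_α) → 1` for every character `φ ∈ Δ(A)`. -/
def IsBoundedDeltaWeakApproximateIdentity {A : Type*} [NonUnitalCommRing A] [Module ℂ A]
    [TopologicalSpace A] {Λ : Type*} [Preorder Λ] (e : Λ → A) : Prop :=
  Bornology.IsVonNBounded ℂ (Set.range e) ∧
    ∀ φ : characterSpace ℂ A, Tendsto (fun α => φ (e α)) atTop (nhds (1 : ℂ))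


noncomputable section BSEHelpers

open scoped Uniformity Pointwise

lemma real_biSup_le {ι : Type*} {f : ι → ℝ} {s : Set ι} {B : ℝ} (hB : 0 ≤ B)
    (h : ∀ i ∈ s, f i ≤ B) : ⨆ i ∈ s, f i ≤ B :=
  Real.iSup_le (fun i => Real.iSup_le (fun hi => h i hi) hB) hB

lemma real_le_biSup {ι : Type*} {f : ι → ℝ} {s : Set ι} {C : ℝ}
    (hC : ∀ i ∈ s, f i ≤ C) {i₀ : ι} (hi₀ : i₀ ∈ s) : f i₀ ≤ ⨆ i ∈ s, f i := by
  have hb : BddAbove (Set.range fun i => ⨆ (_ : i ∈ s), f i) := by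
    refine ⟨max C 0, ?_⟩
    rintro x ⟨i, rfl⟩
    simp only []
    by_cases hi : i ∈ s
    · haveI : Nonempty (i ∈ s) := ⟨hi⟩
      rw [ciSup_const]
      exact le_max_of_le_left (hC i hi)
    · haveI : IsEmpty (i ∈ s) := ⟨hi⟩
      rw [Real.iSup_of_isEmpty]
      exact le_max_right _ _
  haveI : Nonempty (i₀ ∈ s) := ⟨hi₀⟩
  calc f i₀ = ⨆ (_ : i₀ ∈ s), f i₀ := ciSup_const.symm
    _ ≤ ⨆ i ∈ s, f i := le_ciSup hb i₀

lemma functional_bound {X : Type*} [AddCommGroup X] [Module ℂ X] [TopologicalSpace X]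
    (L : X →L[ℂ] ℂ) {M : Set X} (hM : IsVonNBounded ℂ M) :
    ∃ C, ∀ x ∈ M, ‖L x‖ ≤ C := by
  have h2 := hM.image L
  rw [NormedSpace.isVonNBounded_iff'] at h2
  obtain ⟨r, hr⟩ := h2
  exact ⟨r, fun x hx => hr _ (Set.mem_image_of_mem L hx)⟩

variable {A : Type*} [CommRing A] [Algebra ℂ A] [UniformSpace A] [IsUniformAddGroup A]

def idealIncl (I : Ideal A) : ↥I →L[ℂ] A :=
  ⟨{ toFun := Subtype.val
     map_add' := fun _ _ => rfl
     map_smul' := fun _ _ => rfl }, continuous_subtype_val⟩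

lemma frechet_mulRight (hA : IsFrechetAlgebra A) (c : A) :
    ∃ L : A →L[ℂ] A, ∀ a, L a = a * c := by
  obtain ⟨p, hp, -, hsub, -⟩ := hA
  have : IsTopologicalAddGroup A := hp.topologicalAddGroup
  set f : A →ₗ[ℂ] A :=
    { toFun := fun a => a * c
      map_add' := fun a b => add_mul a b c
      map_smul' := fun r a => smul_mul_assoc r a c }
  have hcont : Continuous f := by
    refine Seminorm.continuous_from_bounded hp hp f
      (fun i => ⟨{i}, ⟨p i c, apply_nonneg (p i) c⟩, ?_⟩)
    intro a
    simp only [Seminorm.comp_apply, Seminorm.smul_apply, Finset.sup_singleton]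
    calc p i (f a) = p i (a * c) := rfl
      _ ≤ p i a * p i c := hsub i a c
      _ = (⟨p i c, apply_nonneg (p i) c⟩ : NNReal) • p i a := by
          simp [NNReal.smul_def]; ring
  exact ⟨⟨f, hcont⟩, fun a => rfl⟩

lemma char_uniform_bound (hA : IsFrechetAlgebra A)
    (hpt : ∀ a : A, ∃ C, ∀ ψ : characterSpace ℂ A, ‖ψ a‖ ≤ C)
    {N : Set A} (hN : IsVonNBounded ℂ N) :
    ∃ C, ∀ ψ : characterSpace ℂ A, ∀ a ∈ N, ‖ψ a‖ ≤ C := by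
  obtain ⟨p, hp, -, -, hcomp⟩ := hA
  haveI : CompleteSpace A := hcomp
  haveI : ContinuousSMul ℂ A := hp.continuousSMul
  haveI : (nhds (0:A)).IsCountablyGenerated := by
    rw [(SeminormFamily.withSeminorms_iff_nhds_eq_iInf _).mp hp]
    exact Filter.iInf.isCountablyGenerated _
  haveI : (𝓤 A).IsCountablyGenerated := IsUniformAddGroup.uniformity_countably_generated
  haveI : BaireSpace A := inferInstance
  haveI : BarrelledSpace ℂ A := inferInstance
  have hBS : UniformEquicontinuous
      ((↑) ∘ (fun ψ : characterSpace ℂ A => CharacterSpace.toCLM ψ)) := by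
    refine (norm_withSeminorms ℂ ℂ).banach_steinhaus ?_
    intro k x
    obtain ⟨C, hC⟩ := hpt x
    exact ⟨C, by rintro r ⟨ψ, rfl⟩; simpa using hC ψ⟩
  have hEq := hBS.equicontinuous 0
  have hEv := hEq {q : ℂ × ℂ | dist q.1 q.2 < 1} (Metric.dist_mem_uniformity one_pos)
  rw [eventually_iff_exists_mem] at hEv
  obtain ⟨S, hS, hS1⟩ := hEv
  have hS1' : ∀ x ∈ S, ∀ ψ : characterSpace ℂ A, ‖ψ x‖ ≤ 1 := by
    intro x hx ψ
    have := hS1 x hx ψ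
    simp only [Function.comp_apply, CharacterSpace.coe_toCLM, map_zero] at this
    rw [Set.mem_setOf_eq, dist_zero_left] at this
    exact this.le
  have habs : Absorbs ℂ S N := hN hS
  obtain ⟨c, hc, hcn⟩ : ∃ c : ℂ, N ⊆ c • S ∧ 1 ≤ ‖c‖ :=
    (habs.and (tendsto_norm_cobounded_atTop.eventually (eventually_ge_atTop 1))).exists
  refine ⟨‖c‖, fun ψ a ha => ?_⟩
  obtain ⟨s, hs, rfl⟩ := hc ha
  rw [map_smul, smul_eq_mul, norm_mul]
  calc ‖c‖ * ‖ψ s‖ ≤ ‖c‖ * 1 := mul_le_mul_of_nonneg_left (hS1' s hs ψ) (norm_nonneg c)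
    _ = ‖c‖ := mul_one _

lemma ideal_mul_clm (hA : IsFrechetAlgebra A) (I : Ideal A) (x0 : ↥I) :
    ∃ m : A →L[ℂ] ↥I, ∀ a : A, (m a : A) = a * (x0 : A) := by
  obtain ⟨L, hL⟩ := frechet_mulRight hA (x0 : A)
  have hmem : ∀ a : A, a * (x0 : A) ∈ I := fun a => I.mul_mem_left a x0.2
  set f : A →ₗ[ℂ] ↥I :=
    { toFun := fun a => ⟨a * (x0 : A), hmem a⟩
      map_add' := fun a b => Subtype.ext (add_mul a b (x0 : A))
      map_smul' := fun r a => Subtype.ext (smul_mul_assoc r a (x0 : A)) }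
  have hcont : Continuous f := by
    apply Continuous.subtype_mk
    have : (fun a : A => a * (x0 : A)) = ⇑L := by ext a; rw [hL]
    rw [this]; exact L.continuous
  exact ⟨⟨f, hcont⟩, fun a => rfl⟩

lemma char_extension_core (hA : IsFrechetAlgebra A) (I : Ideal A) (x0 : ↥I) :
    ∃ E : characterSpace ℂ ↥I → WeakDual ℂ A,
      Continuous (fun φ : {φ : characterSpace ℂ ↥I // φ x0 ≠ 0} => E ↑φ) ∧
      ∀ φ : characterSpace ℂ ↥I, φ x0 ≠ 0 →
        (E φ ∈ characterSpace ℂ A ∧ ∀ y : ↥I, E φ ↑y = φ y) := by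
  obtain ⟨m, hm⟩ := ideal_mul_clm hA I x0
  refine ⟨fun φ => (φ x0)⁻¹ • ((CharacterSpace.toCLM φ).comp m), ?_, ?_⟩
  · apply WeakDual.continuous_of_continuous_eval
    intro a
    have h1 : Continuous fun φ : {φ : characterSpace ℂ ↥I // φ x0 ≠ 0} =>
        (φ : characterSpace ℂ ↥I) (m a) := by
      have := WeakDual.eval_continuous (𝕜 := ℂ) (E := ↥I) (m a)
      exact (this.comp continuous_subtype_val).comp continuous_subtype_val
    have h2 : Continuous fun φ : {φ : characterSpace ℂ ↥I // φ x0 ≠ 0} =>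
        ((φ : characterSpace ℂ ↥I) x0)⁻¹ := by
      have hx : Continuous fun φ : {φ : characterSpace ℂ ↥I // φ x0 ≠ 0} =>
          (φ : characterSpace ℂ ↥I) x0 := by
        have := WeakDual.eval_continuous (𝕜 := ℂ) (E := ↥I) x0
        exact (this.comp continuous_subtype_val).comp continuous_subtype_val
      exact hx.inv₀ (fun φ => φ.2)
    exact h2.mul h1
  · intro φ hφ
    have key : ∀ y : ↥I, ((φ x0)⁻¹ • ((CharacterSpace.toCLM φ).comp m)) (y : A) = φ y := by
      intro y
      have : m (y : A) = y * x0 := Subtype.ext (hm (y : A))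
      simp only [ContinuousLinearMap.smul_apply, ContinuousLinearMap.comp_apply, this,
        CharacterSpace.coe_toCLM, map_mul, smul_eq_mul]
      field_simp
    constructor
    · constructor
      · intro h0
        apply hφ
        have h0' : ((φ x0)⁻¹ • ((CharacterSpace.toCLM φ).comp m)) = (0 : A →L[ℂ] ℂ) := h0
        have : ((φ x0)⁻¹ • ((CharacterSpace.toCLM φ).comp m)) ((x0 : ↥I) : A) = 0 := by
          rw [h0']; rfl
        rw [key x0] at this
        exact this
      · intro x y
        show ((φ x0)⁻¹ * φ (m (x * y))) = ((φ x0)⁻¹ * φ (m x)) * ((φ x0)⁻¹ * φ (m y))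
        have e1 : φ (m (x * y)) * φ x0 = φ (m x) * φ (m y) := by
          rw [← map_mul, ← map_mul]
          congr 1
          apply Subtype.ext
          show (m (x*y) : A) * (x0 : A) = ((m x : A)) * (m y : A)
          rw [hm, hm, hm]; ring
        have hx0 : φ x0 ≠ 0 := hφ
        field_simp
        linear_combination e1
    · exact key

lemma char_exists_ne_zero {I : Ideal A} (φ : characterSpace ℂ ↥I) : ∃ x : ↥I, φ x ≠ 0 := by
  by_contra h
  push_neg at h
  exact φ.prop.1 (ContinuousLinearMap.ext fun x => h x)

lemma char_extend (hA : IsFrechetAlgebra A) (I : Ideal A) (φ : characterSpace ℂ ↥I) :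
    ∃ ψ : characterSpace ℂ A, ∀ y : ↥I, ψ ↑y = φ y := by
  obtain ⟨x0, hx0⟩ := char_exists_ne_zero φ
  obtain ⟨E, -, hE⟩ := char_extension_core hA I x0
  obtain ⟨hmem, hres⟩ := hE φ hx0
  exact ⟨⟨E φ, hmem⟩, hres⟩

lemma char_discrete (hA : IsFrechetAlgebra A)
    (hdisc : DiscreteTopology (characterSpace ℂ A)) (I : Ideal A) :
    DiscreteTopology (characterSpace ℂ ↥I) := by
  rw [discreteTopology_iff_isOpen_singleton]
  intro φ₀
  obtain ⟨x0, hx0⟩ := char_exists_ne_zero φ₀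
  obtain ⟨E, hEcont, hE⟩ := char_extension_core hA I x0
  set D : Set (characterSpace ℂ ↥I) := {φ | φ x0 ≠ 0} with hD
  have hDopen : IsOpen D := by
    have : Continuous fun φ : characterSpace ℂ ↥I => φ x0 :=
      (WeakDual.eval_continuous (𝕜 := ℂ) (E := ↥I) x0).comp continuous_subtype_val
    exact isOpen_compl_iff.mpr (isClosed_singleton.preimage this)
  set ψ₀ : characterSpace ℂ A := ⟨E φ₀, (hE φ₀ hx0).1⟩ with hψ₀
  set F : D → characterSpace ℂ A := fun φ => ⟨E ↑φ, (hE ↑φ φ.2).1⟩ with hF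
  have hFcont : Continuous F := Continuous.subtype_mk (hEcont) _
  have hopen : IsOpen (F ⁻¹' {ψ₀}) := (isOpen_discrete {ψ₀}).preimage hFcont
  have himg : {φ₀} = Subtype.val '' (F ⁻¹' {ψ₀}) := by
    apply Set.eq_of_subset_of_subset
    · rintro φ rfl
      exact ⟨⟨φ, hx0⟩, by simp [hF, hψ₀], rfl⟩
    · rintro φ ⟨⟨φ', hφ'⟩, hmem, rfl⟩
      simp only [Set.mem_preimage, Set.mem_singleton_iff] at hmem
      have hEeq : E φ' = E φ₀ := congrArg Subtype.val hmem
      have : φ' = φ₀ := by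
        ext y
        rw [← (hE φ' hφ').2 y, ← (hE φ₀ hx0).2 y, hEeq]
      simp [this]
  rw [himg]
  exact hDopen.isOpenMap_subtype_val _ hopen

end BSEHelpers

/-- Let `A` be a commutative semisimple Fréchet algebra which is a BSE-algebra
and whose character space is discrete, and let `I` be an essential closed ideal of `A` (with the
subspace topology).  If `I` is semisimple and has a bounded Δ-weak approximate identity, then
`I` is a BSE-algebra. -/
theorem essential_ideal_isBSEAlgebra
    {A : Type*} [CommRing A] [Algebra ℂ A] [UniformSpace A] [IsUniformAddGroup A]
    (hA : IsFrechetAlgebra A) (hAss : IsSemisimple A) (hABSE : IsBSEAlgebra A)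
    (hdisc : DiscreteTopology (characterSpace ℂ A))
    (I : Ideal A) (hIc : IsClosed (I : Set A)) (hIe : IsEssentialIdeal I)
    (hIss : IsSemisimple ↥I)
    {Λ : Type*} [Preorder Λ] [IsDirected Λ (· ≤ ·)] [Nonempty Λ]
    (e : Λ → ↥I) (he : IsBoundedDeltaWeakApproximateIdentity e) :
    IsBSEAlgebra ↥I := by
  classical
  haveI : ContinuousSMul ℂ A := (hA.choose_spec.1).continuousSMul
  have hpt : ∀ a : A, ∃ C, ∀ ψ : characterSpace ℂ A, ‖ψ a‖ ≤ C := by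
    intro a
    obtain ⟨L, hL⟩ := frechet_mulRight hA a
    have hmul : IsMultiplier L := fun x y => by rw [hL, hL]; ring
    obtain ⟨σa, hσa, heig⟩ := hABSE.1 L hmul
    obtain ⟨C, hC⟩ := hσa.2.1
    refine ⟨C, fun ψ => ?_⟩
    have h1 := heig ψ 1
    rw [hL 1, one_mul, map_one, mul_one] at h1
    rw [h1]; exact hC ψ
  haveI hIdisc : DiscreteTopology (characterSpace ℂ ↥I) := char_discrete hA hdisc I
  haveI : (atTop : Filter Λ).NeBot := atTop_neBot_iff.mpr ⟨‹_›, ‹_›⟩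
  have hx : ∀ φ : characterSpace ℂ ↥I, ∃ x : ↥I, φ x ≠ 0 := char_exists_ne_zero
  constructor
  · -- every multiplier gives a BSE function
    intro T hT
    set σ : characterSpace ℂ ↥I → ℂ :=
      fun φ => φ (T (hx φ).choose) * (φ ((hx φ).choose))⁻¹ with hσdef
    have key : ∀ (φ : characterSpace ℂ ↥I) (x : ↥I), φ (T x) = σ φ * φ x := by
      intro φ x
      have h0 : φ (hx φ).choose ≠ 0 := (hx φ).choose_spec
      have e1 : φ (hx φ).choose * φ (T x) = φ x * φ (T (hx φ).choose) := by
        rw [← map_mul, ← map_mul]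
        congr 1
        rw [← hT (hx φ).choose x, ← hT x (hx φ).choose, mul_comm]
      rw [hσdef]
      field_simp
      linear_combination e1
    set M : Set ↥I := Set.range (fun α => T (e α)) with hM
    have hMb : IsVonNBounded ℂ M := by
      have : M = T '' Set.range e := by rw [hM, ← Set.range_comp]; rfl
      rw [this]
      exact he.1.image T
    have hσlim : ∀ φ : characterSpace ℂ ↥I,
        Tendsto (fun α => φ (T (e α))) atTop (nhds (σ φ)) := by
      intro φ
      have h2 : Tendsto (fun α => σ φ * φ (e α)) atTop (nhds (σ φ * 1)) :=
        (he.2 φ).const_mul (σ φ)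
      rw [mul_one] at h2
      refine h2.congr fun α => (key φ (e α)).symm
    refine ⟨σ, ⟨continuous_of_discreteTopology, ?_, M, 1, zero_le_one, hMb, ?_⟩, key⟩
    · -- boundedness
      have hNb : IsVonNBounded ℂ (Subtype.val '' M : Set A) := by
        have := hMb.image (idealIncl I)
        exact this
      obtain ⟨C, hC⟩ := char_uniform_bound hA hpt hNb
      refine ⟨C, fun φ => ?_⟩
      obtain ⟨ψ, hψ⟩ := char_extend hA I φ
      refine le_of_tendsto (hσlim φ).norm (Eventually.of_forall fun α => ?_)
      rw [← hψ (T (e α))]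
      exact hC ψ _ ⟨T (e α), ⟨α, rfl⟩, rfl⟩
    · -- BSE inequality
      intro n c φs
      set L : ↥I →L[ℂ] ℂ := ∑ i, c i • CharacterSpace.toCLM (φs i) with hLdef
      have hLval : ∀ x : ↥I, L x = ∑ i, c i * φs i x := by
        intro x
        rw [hLdef]
        simp [ContinuousLinearMap.sum_apply, ContinuousLinearMap.smul_apply, smul_eq_mul]
      obtain ⟨Cc, hCc⟩ := functional_bound L hMb
      have hCc' : ∀ x ∈ M, ‖∑ i, c i * φs i x‖ ≤ Cc := fun x hxM => by
        rw [← hLval]; exact hCc x hxM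
      have tend : Tendsto (fun α => ‖∑ i, c i * φs i (T (e α))‖) atTop
          (nhds ‖∑ i, c i * σ (φs i)‖) := by
        refine Tendsto.norm (tendsto_finset_sum _ fun i _ => ?_)
        exact (hσlim (φs i)).const_mul (c i)
      rw [one_mul]
      refine le_of_tendsto tend (Eventually.of_forall fun α => ?_)
      exact real_le_biSup hCc' ⟨α, rfl⟩
  · -- every BSE function comes from a multiplier
    intro σ hσ
    obtain ⟨hσcont, ⟨C0, hC0⟩, M, β, hβ, hMb, hineq⟩ := hσ
    have hres : ∀ ψ : characterSpace ℂ A, (∃ y : ↥I, ψ ↑y ≠ 0) →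
        ∃ φ : characterSpace ℂ ↥I, ∀ y : ↥I, φ y = ψ ↑y := by
      intro ψ hψ
      refine ⟨⟨(CharacterSpace.toCLM ψ).comp (idealIncl I), ?_, ?_⟩, fun y => rfl⟩
      · intro h0
        obtain ⟨y, hy⟩ := hψ
        apply hy
        have : ((CharacterSpace.toCLM ψ).comp (idealIncl I)) y = 0 := by rw [h0]; rfl
        exact this
      · intro x y
        show ψ ((x * y : ↥I) : A) = ψ ↑x * ψ ↑y
        rw [show ((x * y : ↥I) : A) = (x : A) * (y : A) from rfl, map_mul]
    set σt : characterSpace ℂ A → ℂ :=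
      fun ψ => if h : ∃ y : ↥I, ψ ↑y ≠ 0 then σ (hres ψ h).choose else 0 with hσt
    have hBSEt : IsBSEFunction σt := by
      refine ⟨continuous_of_discreteTopology, ⟨max C0 0, ?_⟩,
        insert 0 (Subtype.val '' M), β, hβ, ?_, ?_⟩
      · intro ψ
        simp only [hσt]
        by_cases h : ∃ y : ↥I, ψ ↑y ≠ 0
        · rw [dif_pos h]
          exact le_max_of_le_left (hC0 _)
        · rw [dif_neg h]
          simp
      · exact (hMb.image (idealIncl I)).insert 0
      · intro n c ψs
        set M' : Set A := insert 0 (Subtype.val '' M) with hM'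
        set LA : A →L[ℂ] ℂ := ∑ i, c i • CharacterSpace.toCLM (ψs i) with hLA
        have hLAval : ∀ a : A, LA a = ∑ i, c i * ψs i a := by
          intro a
          rw [hLA]
          simp [ContinuousLinearMap.sum_apply, ContinuousLinearMap.smul_apply, smul_eq_mul]
        obtain ⟨CA, hCA⟩ := functional_bound LA ((hMb.image (idealIncl I)).insert 0)
        have hCA' : ∀ a ∈ M', ‖∑ i, c i * ψs i a‖ ≤ CA := by
          intro a ha
          rw [← hLAval]
          exact hCA a ha
        have hRHS0 : 0 ≤ ⨆ a ∈ M', ‖∑ i, c i * ψs i a‖ := by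
          have h0 : ‖∑ i, c i * ψs i (0 : A)‖ = 0 := by simp
          have := real_le_biSup hCA' (Set.mem_insert 0 _)
          rw [h0] at this
          exact this
        rcases isEmpty_or_nonempty (characterSpace ℂ ↥I) with hEmp | hNe
        · have hz : ∀ i, σt (ψs i) = 0 := by
            intro i
            simp only [hσt]
            rw [dif_neg]
            intro h
            exact hEmp.elim (hres (ψs i) h).choose
          simp only [hz, mul_zero, Finset.sum_const_zero, norm_zero]
          exact mul_nonneg hβ hRHS0
        · set φ₀ : characterSpace ℂ ↥I := Classical.arbitrary _ with hφ₀
          set c' : Fin n → ℂ := fun i => if (∃ y : ↥I, ψs i ↑y ≠ 0) then c i else 0 with hc'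
          set φ' : Fin n → characterSpace ℂ ↥I := fun i =>
            if h : (∃ y : ↥I, ψs i ↑y ≠ 0) then (hres (ψs i) h).choose else φ₀ with hφ'
          have hL : (∑ i, c i * σt (ψs i)) = ∑ i, c' i * σ (φ' i) := by
            refine Finset.sum_congr rfl fun i _ => ?_
            simp only [hσt, hc', hφ']
            by_cases h : ∃ y : ↥I, ψs i ↑y ≠ 0
            · rw [dif_pos h, if_pos h, dif_pos h]
            · rw [dif_neg h, if_neg h, mul_zero, zero_mul]
          have hptw : ∀ y : ↥I, (∑ i, c' i * φ' i y) = ∑ i, c i * ψs i ↑y := by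
            intro y
            refine Finset.sum_congr rfl fun i _ => ?_
            simp only [hc', hφ']
            by_cases h : ∃ y : ↥I, ψs i ↑y ≠ 0
            · rw [if_pos h, dif_pos h, (hres (ψs i) h).choose_spec y]
            · push_neg at h
              rw [if_neg (by push_neg; exact h), h y, mul_zero, zero_mul]
          calc ‖∑ i, c i * σt (ψs i)‖ = ‖∑ i, c' i * σ (φ' i)‖ := by rw [hL]
            _ ≤ β * ⨆ y ∈ M, ‖∑ i, c' i * φ' i y‖ := hineq n c' φ'
            _ ≤ β * ⨆ a ∈ M', ‖∑ i, c i * ψs i a‖ := by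
                refine mul_le_mul_of_nonneg_left ?_ hβ
                refine real_biSup_le hRHS0 fun y hy => ?_
                rw [hptw y]
                exact real_le_biSup hCA' (Set.mem_insert_of_mem _ ⟨y, hy, rfl⟩)
    obtain ⟨S, hSm, hSeig⟩ := hABSE.2 σt hBSEt
    set u := S 1 with hu
    have hSa : ∀ a, S a = a * u := fun a => by
      have := hSm a 1
      rwa [mul_one] at this
    have humem : ∀ x : ↥I, (x : A) * u ∈ I := fun x => by
      rw [mul_comm]; exact I.mul_mem_left u x.2
    obtain ⟨Lu, hLu⟩ := frechet_mulRight hA u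
    set Tlin : ↥I →ₗ[ℂ] ↥I :=
      { toFun := fun x => ⟨(x : A) * u, humem x⟩
        map_add' := fun a b => Subtype.ext (add_mul (a : A) (b : A) u)
        map_smul' := fun r a => Subtype.ext (smul_mul_assoc r (a : A) u) } with hTlin
    have hTcont : Continuous Tlin := by
      apply Continuous.subtype_mk
      have : (fun x : ↥I => (x : A) * u) = ⇑Lu ∘ Subtype.val := by
        ext x; simp [hLu]
      rw [this]
      exact Lu.continuous.comp continuous_subtype_val
    set Tc : ↥I →L[ℂ] ↥I := ⟨Tlin, hTcont⟩ with hTc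
    have hTmul : IsMultiplier Tc := by
      intro x y
      apply Subtype.ext
      show ((x * y : ↥I) : A) * u = ((x : A) * ((y : A) * u))
      rw [show ((x * y : ↥I) : A) = (x : A) * (y : A) from rfl, mul_assoc]
    refine ⟨Tc, hTmul, ?_⟩
    · intro φ x
      obtain ⟨ψ, hψ⟩ := char_extend hA I φ
      have hne : ∃ y : ↥I, ψ ↑y ≠ 0 := by
        obtain ⟨y, hy⟩ := hx φ
        exact ⟨y, by rw [hψ]; exact hy⟩
      have hσtv : σt ψ = σ φ := by
        simp only [hσt]
        rw [dif_pos hne]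
        congr 1
        ext y
        rw [(hres ψ hne).choose_spec y, hψ]
      calc φ (Tc x) = ψ ↑(Tc x) := (hψ _).symm
        _ = ψ ((x : A) * u) := rfl
        _ = ψ (S (x : A)) := by rw [hSa]
        _ = σt ψ * ψ ↑x := hSeig ψ (x : A)
        _ = σ φ * φ x := by rw [hσtv, hψ]
end
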